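/- arXiv:1707.06274 — 11 statements merged into one kernel-verified Lean document; each statement's English description precedes it below -/
import Mathlib

section
/- Let λ ≥ 0 and define F_λ(x,y,z) = arctan x + arctan y + arctan z − arctan λ + arctan(λ−x) − arctan(y+z) on the set Δ_λ = {(x,y,z) ∈ ℝ³ : −y ≤ x ≤ λ, −λ ≤ 2y ≤ 0, x−λ ≤ z ≤ 0}. Then the minimum of F_λ over Δ_λ equals 0. -/
lemma arctan_mono_aux (b : ℝ) (hb : 0 ≤ b) {s t : ℝ} (hs : 0 ≤ s) (hst : s ≤ t) :
    Real.arctan s - Real.arctan (s + b) ≤ Real.arctan t - Real.arctan (t + b) := by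
  have hmono : MonotoneOn (fun u : ℝ => Real.arctan u - Real.arctan (u + b)) (Set.Ici 0) := by
    apply monotoneOn_of_deriv_nonneg (convex_Ici 0)
    · exact (Real.continuous_arctan.sub
        (Real.continuous_arctan.comp (continuous_id.add continuous_const))).continuousOn
    · intro u _
      exact ((Real.hasDerivAt_arctan u).sub
        (((Real.hasDerivAt_arctan (u + b)).comp u
          ((hasDerivAt_id u).add_const b)))).differentiableAt.differentiableWithinAt
    · intro u hu
      rw [interior_Ici] at hu
      have hd : HasDerivAt (fun u : ℝ => Real.arctan u - Real.arctan (u + b))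
          (1 / (1 + u ^ 2) - 1 / (1 + (u + b) ^ 2) * 1) u :=
        (Real.hasDerivAt_arctan u).sub
          (by have := ((Real.hasDerivAt_arctan (u + b)).comp u ((hasDerivAt_id u).add_const b)); exact this)
      rw [hd.deriv]
      have h1 : (0:ℝ) < 1 + u ^ 2 := by positivity
      have h2 : (1:ℝ) + u ^ 2 ≤ 1 + (u + b) ^ 2 := by nlinarith [(Set.mem_Ioi.mp hu).le]
      have h3 : 1 / (1 + (u + b) ^ 2) ≤ 1 / (1 + u ^ 2) := by
        apply div_le_div_of_nonneg_left (by norm_num) h1 h2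
      linarith
  exact hmono hs (le_trans hs hst) hst

/-- The minimum of F_λ over Δ_λ equals 0. -/
theorem min_F_lambda (l : ℝ) (hl : 0 ≤ l)
    (F : ℝ × ℝ × ℝ → ℝ)
    (hF : ∀ x y z : ℝ, F (x, y, z) =
      Real.arctan x + Real.arctan y + Real.arctan z - Real.arctan l
        + Real.arctan (l - x) - Real.arctan (y + z))
    (Δ : Set (ℝ × ℝ × ℝ))
    (hΔ : Δ = {p : ℝ × ℝ × ℝ |
      -p.2.1 ≤ p.1 ∧ p.1 ≤ l ∧ -l ≤ 2 * p.2.1 ∧ 2 * p.2.1 ≤ 0 ∧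
      p.1 - l ≤ p.2.2 ∧ p.2.2 ≤ 0}) :
    IsLeast (F '' Δ) 0 := by
  constructor
  · refine ⟨(0, 0, 0), ?_, ?_⟩
    · rw [hΔ]; simp; exact hl
    · rw [hF 0 0 0]; simp
  · rintro v ⟨⟨x, y, z⟩, hp, rfl⟩
    rw [hΔ] at hp
    obtain ⟨h1, h2, h3, h4, h5, h6⟩ := hp
    simp only at h1 h2 h3 h4 h5 h6
    rw [hF x y z]
    set a := -y with ha
    set c := -z with hc
    have hy : y = -a := by rw [ha]; ring
    have hz : z = -c := by rw [hc]; ring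
    have ha0 : 0 ≤ a := by simp [ha]; linarith
    have hc0 : 0 ≤ c := by simp [hc]; linarith
    have hax : a ≤ x := by linarith [h1]
    have hclx : c ≤ l - x := by simp [hc]; linarith
    -- Step 1: arctan a - arctan (a + (l - x)) ≤ arctan x - arctan (x + (l - x))
    have hlx0 : 0 ≤ l - x := by linarith
    have s1 := arctan_mono_aux (l - x) hlx0 ha0 hax
    -- Step 2: arctan c - arctan (c + a) ≤ arctan (l-x) - arctan (l - x + a)
    have s2 := arctan_mono_aux a ha0 hc0 hclx
    have e1 : x + (l - x) = l := by ring
    have e2 : a + (l - x) = l - x + a := by ring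
    rw [e1] at s1
    rw [e2] at s1
    have hyz : Real.arctan (y + z) = -Real.arctan (a + c) := by
      rw [hy, hz, show -a + -c = -(a+c) by ring, Real.arctan_neg]
    have hya : Real.arctan y = -Real.arctan a := by rw [hy, Real.arctan_neg]
    have hza : Real.arctan z = -Real.arctan c := by rw [hz, Real.arctan_neg]
    have e3 : c + a = a + c := by ring
    rw [e3] at s2
    rw [hyz, hya, hza]
    linarith
end

section
/- Let λ > 0 and F_λ, Δ_λ as before. The minimum value 0 of F_λ on Δ_λ is attained at (x,y,z) ∈ Δ_λ if and only if one of the following holds: (i) x = λ, z = 0, y ∈ [−λ/2, 0]; (ii) x = −y, z = −y−λ, y ∈ [−λ/2, 0]; (iii) x = y = 0, z ∈ [−λ, 0]. -/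
open Real Set

private lemma gderiv' (s t : ℝ) : HasDerivAt (fun t => Real.arctan t - Real.arctan (s + t))
    (1/(1+t^2) - 1/(1+(s+t)^2)) t := by
  have h1 := Real.hasDerivAt_arctan t
  have h2 : HasDerivAt (fun t => Real.arctan (s + t)) (1/(1+(s+t)^2)) t := by
    have := (Real.hasDerivAt_arctan (s+t)).comp t ((hasDerivAt_const t s).add (hasDerivAt_id t))
    simpa [Function.comp_def] using this
  exact h1.sub h2

private lemma gcont' (s : ℝ) :
    ContinuousOn (fun t => Real.arctan t - Real.arctan (s + t)) (Set.Ici 0) :=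
  (Real.continuous_arctan.sub
    (Real.continuous_arctan.comp (continuous_const.add continuous_id))).continuousOn

private lemma gmono' (s : ℝ) (hs : 0 ≤ s) :
    MonotoneOn (fun t => Real.arctan t - Real.arctan (s + t)) (Set.Ici 0) := by
  apply monotoneOn_of_deriv_nonneg (convex_Ici 0) (gcont' s)
  · intro t ht
    exact (gderiv' s t).differentiableAt.differentiableWithinAt
  · intro t ht
    rw [interior_Ici] at ht
    rw [(gderiv' s t).deriv]
    have h1 : (0:ℝ) < 1 + t^2 := by positivity
    have h2 : 1 + t^2 ≤ 1 + (s+t)^2 := by nlinarith [(Set.mem_Ioi.mp ht).le]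
    have := one_div_le_one_div_of_le h1 h2
    linarith

private lemma gstrict' (s : ℝ) (hs : 0 < s) :
    StrictMonoOn (fun t => Real.arctan t - Real.arctan (s + t)) (Set.Ici 0) := by
  apply strictMonoOn_of_deriv_pos (convex_Ici 0) (gcont' s)
  intro t ht
  rw [interior_Ici] at ht
  rw [(gderiv' s t).deriv]
  have h1 : (0:ℝ) < 1 + t^2 := by positivity
  have ht' : 0 < t := ht
  have h2 : 1 + t^2 < 1 + (s+t)^2 := by nlinarith [sq_nonneg s, mul_pos hs ht']
  have := one_div_lt_one_div_of_lt h1 h2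
  linarith

private lemma Geq' {u v a b : ℝ} (hu : 0 ≤ u) (hv : 0 ≤ v) (hua : u ≤ a) (hvb : v ≤ b)
    (heq : Real.arctan u + Real.arctan v - Real.arctan (u + v)
      = Real.arctan a + Real.arctan b - Real.arctan (a + b)) :
    (u = a ∧ v = b) ∨ a = 0 ∨ b = 0 := by
  have ha : 0 ≤ a := hu.trans hua
  have hb : 0 ≤ b := hv.trans hvb
  -- chain inequalities
  have h12 : Real.arctan u + Real.arctan v - Real.arctan (u + v)
      ≤ Real.arctan a + Real.arctan v - Real.arctan (a + v) := by
    have := gmono' v hv (Set.mem_Ici.2 hu) (Set.mem_Ici.2 ha) hua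
    simp only at this
    have e1 : u + v = v + u := by ring
    have e2 : a + v = v + a := by ring
    rw [e1, e2]; linarith
  have h23 : Real.arctan a + Real.arctan v - Real.arctan (a + v)
      ≤ Real.arctan a + Real.arctan b - Real.arctan (a + b) := by
    have := gmono' a ha (Set.mem_Ici.2 hv) (Set.mem_Ici.2 hb) hvb
    simp only at this
    linarith
  by_cases ha0 : a = 0
  · exact Or.inr (Or.inl ha0)
  have hapos : 0 < a := lt_of_le_of_ne ha (Ne.symm ha0)
  -- v = b
  have hvb' : v = b := by
    by_contra hne
    have hvlt : v < b := lt_of_le_of_ne hvb hne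
    have := gstrict' a hapos (Set.mem_Ici.2 hv) (Set.mem_Ici.2 hb) hvlt
    simp only at this
    linarith
  by_cases hb0 : b = 0
  · exact Or.inr (Or.inr hb0)
  have hbpos : 0 < b := lt_of_le_of_ne hb (Ne.symm hb0)
  have hvpos : 0 < v := hvb' ▸ hbpos
  have hua' : u = a := by
    by_contra hne
    have hult : u < a := lt_of_le_of_ne hua hne
    have := gstrict' v hvpos (Set.mem_Ici.2 hu) (Set.mem_Ici.2 ha) hult
    simp only at this
    have e1 : u + v = v + u := by ring
    have e2 : a + v = v + a := by ring
    rw [← e1, ← e2] at this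
    linarith
  exact Or.inl ⟨hua', hvb'⟩

/-- Characterization of the minimizers of F_λ over Δ_λ for λ > 0. -/
theorem min_F_lambda_cases (l : ℝ) (hl : 0 < l)
    (F : ℝ × ℝ × ℝ → ℝ)
    (hF : ∀ x y z : ℝ, F (x, y, z) =
      Real.arctan x + Real.arctan y + Real.arctan z - Real.arctan l
        + Real.arctan (l - x) - Real.arctan (y + z))
    (Δ : Set (ℝ × ℝ × ℝ))
    (hΔ : Δ = {p : ℝ × ℝ × ℝ |
      -p.2.1 ≤ p.1 ∧ p.1 ≤ l ∧ -l ≤ 2 * p.2.1 ∧ 2 * p.2.1 ≤ 0 ∧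
      p.1 - l ≤ p.2.2 ∧ p.2.2 ≤ 0})
    (x y z : ℝ) (hmem : (x, y, z) ∈ Δ) :
    F (x, y, z) = 0 ↔
      (x = l ∧ z = 0 ∧ y ∈ Set.Icc (-(l/2)) 0) ∨
      (x = -y ∧ z = -y - l ∧ y ∈ Set.Icc (-(l/2)) 0) ∨
      (x = 0 ∧ y = 0 ∧ z ∈ Set.Icc (-l) 0) := by
  subst hΔ
  simp only [Set.mem_setOf_eq] at hmem
  obtain ⟨h1, h2, h3, h4, h5, h6⟩ := hmem
  constructor
  · intro hF0
    have heq : Real.arctan (-y) + Real.arctan (-z) - Real.arctan (-y + -z)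
        = Real.arctan x + Real.arctan (l - x) - Real.arctan (x + (l - x)) := by
      have e0 : x + (l - x) = l := by ring
      rw [e0]
      have e1 : -y + -z = -(y + z) := by ring
      rw [e1, Real.arctan_neg, Real.arctan_neg, Real.arctan_neg]
      have := hF x y z
      rw [hF0] at this
      linarith
    have hu : (0:ℝ) ≤ -y := by linarith
    have hv : (0:ℝ) ≤ -z := by linarith
    have hvb : -z ≤ l - x := by linarith
    rcases Geq' hu hv h1 hvb heq with ⟨ea, eb⟩ | ha0 | hb0
    · exact Or.inr (Or.inl ⟨ea.symm, by linarith, by constructor <;> linarith⟩)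
    · refine Or.inr (Or.inr ⟨ha0, by linarith, by constructor <;> linarith⟩)
    · exact Or.inl ⟨by linarith, by linarith, by constructor <;> linarith⟩
  · rintro (⟨hx, hz, hy1, hy2⟩ | ⟨hx, hz, hy1, hy2⟩ | ⟨hx, hy, hz1, hz2⟩)
    · subst hx; subst hz
      rw [hF, sub_self, add_zero, Real.arctan_zero]; ring
    · subst hx; subst hz
      rw [hF, show y + (-y - l) = -l by ring, show (-y - l) = -(y + l) by ring,
        show l - -y = y + l by ring, Real.arctan_neg, Real.arctan_neg, Real.arctan_neg]
      ring
    · subst hx; subst hy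
      rw [hF, Real.arctan_zero, sub_zero, zero_add]
      ring
end

section
/- Let a < b, q ≥ 0, and let u : [a,b] → ℝ be q-concave (i.e., x ↦ u(x) − (q/2)x² is concave) with u(a) = u(b) ≥ u(x) for all x ∈ [a,b]. Then for every x ∈ (a,b), the one-sided derivatives exist and satisfy (q/2)(x−b) ≤ u'₊(x) ≤ u'₋(x) ≤ (q/2)(x−a). -/
open Set

/-- A concave function on `[a,b]` has one-sided derivatives at each interior point,
sandwiched between the slopes to the endpoints. -/
theorem concave_one_sided_deriv (a b : ℝ) (hab : a < b) (v : ℝ → ℝ)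
    (hconc : ConcaveOn ℝ (Set.Icc a b) v) (x : ℝ) (hx : x ∈ Set.Ioo a b) :
    ∃ dp dm : ℝ,
      HasDerivWithinAt v dp (Set.Ici x) x ∧ HasDerivWithinAt v dm (Set.Iic x) x ∧
      slope v x b ≤ dp ∧ dp ≤ dm ∧ dm ≤ slope v x a := by
  obtain ⟨hax, hxb⟩ := hx
  have hxI : x ∈ Icc a b := ⟨hax.le, hxb.le⟩
  have hanti : AntitoneOn (slope v x) (Icc a b \ {x}) := hconc.slope_anti hxI
  set g := slope v x with hg
  have hmemR : ∀ y ∈ Ioo x b, y ∈ Icc a b \ {x} := fun y hy =>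
    ⟨⟨(hax.trans hy.1).le, hy.2.le⟩, ne_of_gt hy.1⟩
  have hmemL : ∀ y ∈ Ioo a x, y ∈ Icc a b \ {x} := fun y hy =>
    ⟨⟨hy.1.le, (hy.2.trans hxb).le⟩, ne_of_lt hy.2⟩
  have haM : a ∈ Icc a b \ {x} := ⟨⟨le_refl a, hab.le⟩, ne_of_lt hax⟩
  have hbM : b ∈ Icc a b \ {x} := ⟨⟨hab.le, le_refl b⟩, ne_of_gt hxb⟩
  have hneR : (Ioo x b).Nonempty := nonempty_Ioo.2 hxb
  have hneL : (Ioo a x).Nonempty := nonempty_Ioo.2 hax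
  have hRa : ∀ y ∈ Ioo x b, g y ≤ g a := fun y hy => hanti haM (hmemR y hy) (hax.trans hy.1).le
  have hLb : ∀ y ∈ Ioo a x, g b ≤ g y := fun y hy => hanti (hmemL y hy) hbM (hy.2.trans hxb).le
  have hbddR : BddAbove (g '' Ioo x b) := ⟨g a, by rintro _ ⟨y, hy, rfl⟩; exact hRa y hy⟩
  have hbddL : BddBelow (g '' Ioo a x) := ⟨g b, by rintro _ ⟨y, hy, rfl⟩; exact hLb y hy⟩
  have hantiR : AntitoneOn g (Ioo x b) := fun y hy z hz hyz =>
    hanti (hmemR y hy) (hmemR z hz) hyz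
  have hantiL : AntitoneOn g (Ioo a x) := fun y hy z hz hyz =>
    hanti (hmemL y hy) (hmemL z hz) hyz
  refine ⟨sSup (g '' Ioo x b), sInf (g '' Ioo a x), ?_, ?_, ?_, ?_, ?_⟩
  · rw [hasDerivWithinAt_iff_tendsto_slope, Ici_sdiff_left]
    exact hantiR.tendsto_nhdsWithin_Ioo_right hneR hbddR
  · rw [hasDerivWithinAt_iff_tendsto_slope, Iic_diff_right]
    exact hantiL.tendsto_nhdsWithin_Ioo_left hneL hbddL
  · obtain ⟨y, hy⟩ := hneR
    calc g b ≤ g y := hanti (hmemR y hy) hbM hy.2.le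
      _ ≤ _ := le_csSup hbddR ⟨y, hy, rfl⟩
  · apply csSup_le (hneR.image g)
    rintro _ ⟨y, hy, rfl⟩
    apply le_csInf (hneL.image g)
    rintro _ ⟨w, hw, rfl⟩
    exact hanti (hmemL w hw) (hmemR y hy) (hw.2.trans hy.1).le
  · obtain ⟨w, hw⟩ := hneL
    calc sInf (g '' Ioo a x) ≤ g w := csInf_le hbddL ⟨w, hw, rfl⟩
      _ ≤ g a := hanti haM (hmemL w hw) hw.1.le

/-- One-sided derivative bounds for a q-concave function with equal maximal
boundary values: (q/2)(x−b) ≤ u'₊(x) ≤ u'₋(x) ≤ (q/2)(x−a) on (a,b). -/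
theorem qconcave_one_sided_deriv_bounds (a b q : ℝ) (hab : a < b) (hq : 0 ≤ q)
    (u : ℝ → ℝ)
    (hconc : ConcaveOn ℝ (Set.Icc a b) (fun x => u x - q / 2 * x^2))
    (hend : u a = u b) (hmax : ∀ x ∈ Set.Icc a b, u x ≤ u a)
    (x : ℝ) (hx : x ∈ Set.Ioo a b) :
    ∃ dp dm : ℝ,
      HasDerivWithinAt u dp (Set.Ici x) x ∧
      HasDerivWithinAt u dm (Set.Iic x) x ∧
      q / 2 * (x - b) ≤ dp ∧ dp ≤ dm ∧ dm ≤ q / 2 * (x - a) := by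
  set v : ℝ → ℝ := fun y => u y - q / 2 * y^2 with hv
  obtain ⟨dvp, dvm, hvp, hvm, hslb, hpm, hsla⟩ :=
    concave_one_sided_deriv a b hab v hconc x hx
  obtain ⟨hax, hxb⟩ := hx
  have hqx : HasDerivAt (fun y : ℝ => q / 2 * y ^ 2) (q * x) x := by
    have h := (hasDerivAt_pow 2 x).const_mul (q / 2)
    refine h.congr_deriv ?_
    push_cast
    ring
  have huv : u = fun y => v y + q / 2 * y ^ 2 := by funext y; simp [hv]
  refine ⟨dvp + q * x, dvm + q * x, ?_, ?_, ?_, by linarith, ?_⟩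
  · rw [huv]; exact hvp.add hqx.hasDerivWithinAt
  · rw [huv]; exact hvm.add hqx.hasDerivWithinAt
  · -- q/2 (x - b) ≤ dvp + q x, using slope v x b ≤ dvp
    have hbx : b - x ≠ 0 := by linarith
    have hub : 0 ≤ (u b - u x) / (b - x) := by
      apply div_nonneg _ (by linarith)
      have := hmax x ⟨hax.le, hxb.le⟩
      linarith [hend]
    have hsb : slope v x b = (u b - u x) / (b - x) - q / 2 * (b + x) := by
      rw [slope_def_field, hv]
      field_simp
      ring
    rw [hsb] at hslb
    nlinarith
  · -- dvm + q x ≤ q/2 (x - a), using dvm ≤ slope v x a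
    have hax' : a - x ≠ 0 := by linarith
    have hua : (u a - u x) / (a - x) ≤ 0 := by
      apply div_nonpos_of_nonneg_of_nonpos
      · have := hmax x ⟨hax.le, hxb.le⟩; linarith
      · linarith
    have hsa : slope v x a = (u a - u x) / (a - x) - q / 2 * (a + x) := by
      rw [slope_def_field, hv]
      field_simp
      ring
    rw [hsa] at hsla
    nlinarith
end

section
/- Let M > 0 and q ∈ [0,1] with 2M ≥ q. Define φ_{M;q}(γ) = M⁴ − M²(1−γ)² − q²γ²(1−γ)⁴ − 3M²q²γ²(1−γ)². Then φ_{M;q} is strictly increasing on [0,1]. -/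
lemma phi_bracket_pos (M q t : ℝ) (hM : 0 < M) (hq : 0 ≤ q^2) (hq1 : q^2 ≤ 1)
    (hq4 : q^2 ≤ 4*M^2) (ht0 : 0 < t) (ht1 : t < 1) :
    0 < M^2 - q^2*t*(1-t)^2*(1-3*t) - 3*M^2*q^2*t*(1-2*t) := by
  have hM2 : (0:ℝ) < M^2 := by positivity
  rcases le_or_gt t (1/3) with h3 | h3
  · have hA : 0 ≤ t*(1-t)^2*(1-3*t) :=
      mul_nonneg (mul_nonneg ht0.le (sq_nonneg _)) (by linarith)
    have hB : 0 ≤ t*(1-2*t) := mul_nonneg ht0.le (by linarith)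
    have e1 : q^2*(t*(1-t)^2*(1-3*t)) ≤ 4*M^2*(t*(1-t)^2*(1-3*t)) :=
      mul_le_mul_of_nonneg_right hq4 hA
    have e2 : q^2*(t*(1-2*t)) ≤ 1*(t*(1-2*t)) := mul_le_mul_of_nonneg_right hq1 hB
    have e3 : 3*M^2*(q^2*(t*(1-2*t))) ≤ 3*M^2*(1*(t*(1-2*t))) :=
      mul_le_mul_of_nonneg_left e2 (by positivity)
    have key : 0 < 1 - 4*(t*(1-t)^2*(1-3*t)) - 3*(t*(1-2*t)) := by
      nlinarith [sq_nonneg (t - 1/6), sq_nonneg t, sq_nonneg (1-t)]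
    nlinarith [mul_pos hM2 key, e1, e3]
  · rcases le_or_gt t (1/2) with h2 | h2
    · have hA : 0 ≤ q^2*(t*(1-t)^2*(3*t-1)) :=
        mul_nonneg hq (mul_nonneg (mul_nonneg ht0.le (sq_nonneg _)) (by linarith))
      have hB : 0 ≤ t*(1-2*t) := mul_nonneg ht0.le (by linarith)
      have e2 : q^2*(t*(1-2*t)) ≤ 1*(t*(1-2*t)) := mul_le_mul_of_nonneg_right hq1 hB
      have e3 : 3*M^2*(q^2*(t*(1-2*t))) ≤ 3*M^2*(1*(t*(1-2*t))) :=
        mul_le_mul_of_nonneg_left e2 (by positivity)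
      nlinarith [hA, e3, sq_nonneg (M*(1-4*t)), hM2]
    · have hA : 0 ≤ q^2*(t*(1-t)^2*(3*t-1)) :=
        mul_nonneg hq (mul_nonneg (mul_nonneg ht0.le (sq_nonneg _)) (by linarith))
      have hB : 0 ≤ 3*M^2*(q^2*(t*(2*t-1))) := by
        apply mul_nonneg (by positivity)
        exact mul_nonneg hq (mul_nonneg ht0.le (by linarith))
      nlinarith [hA, hB, hM2]

lemma phi_hasDerivAt (M q : ℝ) (x : ℝ) :
    HasDerivAt (fun γ : ℝ =>
        M^4 - M^2 * (1 - γ)^2 - q^2 * γ^2 * (1 - γ)^4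
          - 3 * M^2 * q^2 * γ^2 * (1 - γ)^2)
      (2*(1-x) * (M^2 - q^2*x*(1-x)^2*(1-3*x) - 3*M^2*q^2*x*(1-2*x))) x := by
  have h1 : HasDerivAt (fun γ : ℝ => 1 - γ) (-1) x := by
    simpa using (hasDerivAt_const x (1:ℝ)).fun_sub (hasDerivAt_id x)
  have h2 : HasDerivAt (fun γ : ℝ => (1-γ)^2) (2*(1-x)*(-1)) x := by
    simpa using h1.fun_pow 2
  have h4 : HasDerivAt (fun γ : ℝ => (1-γ)^4) (4*(1-x)^3*(-1)) x := by
    simpa using h1.fun_pow 4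
  have hg : HasDerivAt (fun γ : ℝ => γ^2) (2*x) x := by
    simpa using hasDerivAt_pow 2 x
  have := (((hasDerivAt_const x (M^4)).fun_sub (h2.const_mul (M^2))).fun_sub
      ((hg.fun_mul h4).const_mul (q^2))).fun_sub ((hg.fun_mul h2).const_mul (3*M^2*q^2))
  convert this using 1
  · rfl
  · rfl
  · ext γ; ring
  · ring

/-- φ_{M;q}(γ) = M⁴ − M²(1−γ)² − q²γ²(1−γ)⁴ − 3M²q²γ²(1−γ)² is strictly
increasing on [0,1] when M > 0, 0 ≤ q ≤ 1 and 2M ≥ q. -/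
theorem phi_strictMonoOn (M q : ℝ) (hM : 0 < M) (hq0 : 0 ≤ q) (hq1 : q ≤ 1)
    (h2M : q ≤ 2 * M) :
    StrictMonoOn (fun γ : ℝ =>
        M^4 - M^2 * (1 - γ)^2 - q^2 * γ^2 * (1 - γ)^4
          - 3 * M^2 * q^2 * γ^2 * (1 - γ)^2)
      (Set.Icc 0 1) := by
  have hq2 : q^2 ≤ 1 := by nlinarith
  have hq4 : q^2 ≤ 4*M^2 := by nlinarith
  apply strictMonoOn_of_deriv_pos (convex_Icc 0 1)
  · fun_prop
  · intro x hx
    rw [interior_Icc, Set.mem_Ioo] at hx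
    rw [(phi_hasDerivAt M q x).deriv]
    have hb := phi_bracket_pos M q x hM (sq_nonneg q) hq2 hq4 hx.1 hx.2
    have h1x : (0:ℝ) < 2*(1-x) := by linarith
    exact mul_pos h1x hb
end

section
/- Let M ∈ (0,1), q ∈ (0,1] with 2M ≥ q, and define R_{M;q}(γ) = (2/q) arctan(qγ) + 2(1−γ)³/(M² + (1−γ)²) for γ ∈ [0,1]. Then there exists a unique γ* ∈ (0,1) such that R_{M;q}(γ*) = min over [0,1] of R_{M;q}. -/
lemma R_aux_hasDeriv (M q : ℝ) (hM0 : 0 < M) (hq0 : 0 < q) (x : ℝ) :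
    HasDerivAt (fun γ => 2 / q * Real.arctan (q * γ) + 2 * (1 - γ)^3 / (M^2 + (1 - γ)^2))
      (2 * (M^4 - M^2*(1-x)^2 - q^2*x^2*(1-x)^4 - 3*M^2*q^2*x^2*(1-x)^2)
        / ((1+q^2*x^2) * (M^2+(1-x)^2)^2)) x := by
  have hP : (0:ℝ) < M^2 + (1-x)^2 := by positivity
  have h1 : HasDerivAt (fun y => Real.arctan (q*y)) (q / (1+(q*x)^2)) x := by
    have h := (Real.hasDerivAt_arctan (q*x)).comp x ((hasDerivAt_id x).const_mul q)
    refine h.congr_deriv ?_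
    field_simp
  have hone : HasDerivAt (fun y : ℝ => 1 - y) (-1) x := by
    exact (hasDerivAt_id x).const_sub 1
  have h2 : HasDerivAt (fun y : ℝ => 2*(1-y)^3) (2*(3*(1-x)^2*(-1))) x := by
    simpa [mul_comm, mul_assoc, mul_left_comm] using (hone.pow 3).const_mul 2
  have h3 : HasDerivAt (fun y : ℝ => M^2+(1-y)^2) (2*(1-x)*(-1)) x := by
    simpa [mul_comm, mul_assoc, mul_left_comm] using ((hone.pow 2).const_add (M^2))
  have hdiv := h2.div h3 (ne_of_gt hP)
  have hsum := (h1.const_mul (2/q)).add hdiv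
  refine hsum.congr_deriv ?_
  have h1q : (0:ℝ) < 1 + (q*x)^2 := by positivity
  field_simp
  ring

lemma phi_aux_hasDeriv (M q x : ℝ) :
    HasDerivAt (fun γ => M^4 - M^2*(1-γ)^2 - q^2*γ^2*(1-γ)^4 - 3*M^2*q^2*γ^2*(1-γ)^2)
      (2*M^2*(1-x) - q^2*(2*x*(1-x)^4 - 4*x^2*(1-x)^3)
        - 3*M^2*q^2*(2*x*(1-x)^2 - 2*x^2*(1-x))) x := by
  have hone : HasDerivAt (fun y : ℝ => 1 - y) (-1) x := by
    exact (hasDerivAt_id x).const_sub 1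
  have hid : HasDerivAt (fun y : ℝ => y) 1 x := hasDerivAt_id x
  have h1 : HasDerivAt (fun y : ℝ => M^2*(1-y)^2) (M^2*(2*(1-x)*(-1))) x := by
    have := (hone.pow 2).const_mul (M^2)
    refine this.congr_deriv ?_
    push_cast; ring
  have h2 : HasDerivAt (fun y : ℝ => q^2*y^2*(1-y)^4)
      (q^2*(2*x*(1-x)^4 + x^2*(4*(1-x)^3*(-1)))) x := by
    have h := ((hid.pow 2).mul (hone.pow 4)).const_mul (q^2)
    have hfun : (fun y : ℝ => q^2*y^2*(1-y)^4) = (fun y : ℝ => q^2*(y^2*(1-y)^4)) := by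
      ext y; ring
    rw [hfun]
    refine h.congr_deriv ?_
    simp only [Pi.pow_apply]
    push_cast; ring
  have h3 : HasDerivAt (fun y : ℝ => 3*M^2*q^2*y^2*(1-y)^2)
      (3*M^2*q^2*(2*x*(1-x)^2 + x^2*(2*(1-x)*(-1)))) x := by
    have h := ((hid.pow 2).mul (hone.pow 2)).const_mul (3*M^2*q^2)
    have hfun : (fun y : ℝ => 3*M^2*q^2*y^2*(1-y)^2)
        = (fun y : ℝ => 3*M^2*q^2*(y^2*(1-y)^2)) := by ext y; ring
    rw [hfun]
    refine h.congr_deriv ?_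
    simp only [Pi.pow_apply]
    push_cast; ring
  have := (((hasDerivAt_const x (M^4)).sub h1).sub h2).sub h3
  refine this.congr_deriv ?_
  ring

lemma phi_aux_deriv_pos (M q x : ℝ) (hM0 : 0 < M) (hM1 : M < 1)
    (hq0 : 0 < q) (hq1 : q ≤ 1) (h2M : q ≤ 2 * M) (hx0 : 0 < x) (hx1 : x < 1) :
    0 < 2*M^2*(1-x) - q^2*(2*x*(1-x)^4 - 4*x^2*(1-x)^3)
        - 3*M^2*q^2*(2*x*(1-x)^2 - 2*x^2*(1-x)) := by
  have hq4 : q^2 ≤ 4*M^2 := by nlinarith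
  have hq1s : q^2 ≤ 1 := by nlinarith
  have ht : x*(1-x)^2*(1-3*x) ≤ 4/27 := by
    nlinarith [mul_nonneg (sq_nonneg (3*x-1)) (by linarith : (0:ℝ) ≤ 4-3*x), sq_nonneg (x*(1-x))]
  have hs : x*(1-2*x) ≤ 1/8 := by nlinarith [sq_nonneg (4*x-1)]
  have hψ : 0 < M^2 - q^2*(x*(1-x)^2*(1-3*x)) - 3*M^2*q^2*(x*(1-2*x)) := by
    have h1 : q^2*(x*(1-x)^2*(1-3*x)) ≤ q^2*(4/27) :=
      mul_le_mul_of_nonneg_left ht (sq_nonneg q)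
    have h2 : q^2*(x*(1-2*x)) ≤ q^2*(1/8) :=
      mul_le_mul_of_nonneg_left hs (sq_nonneg q)
    nlinarith [mul_nonneg (sq_nonneg M) (by linarith : (0:ℝ) ≤ 1 - q^2), sq_nonneg M,
      mul_pos hM0 hM0]
  have key : 2*M^2*(1-x) - q^2*(2*x*(1-x)^4 - 4*x^2*(1-x)^3)
        - 3*M^2*q^2*(2*x*(1-x)^2 - 2*x^2*(1-x))
      = 2*(1-x)*(M^2 - q^2*(x*(1-x)^2*(1-3*x)) - 3*M^2*q^2*(x*(1-2*x))) := by ring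
  rw [key]
  have : (0:ℝ) < 1 - x := by linarith
  positivity

/-- For M ∈ (0,1), q ∈ (0,1] with 2M ≥ q, the function
R_{M;q}(γ) = (2/q) arctan(qγ) + 2(1−γ)³/(M²+(1−γ)²) has a unique minimizer
γ* ∈ (0,1) over [0,1]. -/
theorem R_unique_minimizer (M q : ℝ) (hM0 : 0 < M) (hM1 : M < 1)
    (hq0 : 0 < q) (hq1 : q ≤ 1) (h2M : q ≤ 2 * M)
    (R : ℝ → ℝ)
    (hR : ∀ γ, R γ = 2 / q * Real.arctan (q * γ)
        + 2 * (1 - γ)^3 / (M^2 + (1 - γ)^2)) :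
    ∃! γ : ℝ, γ ∈ Set.Ioo (0:ℝ) 1 ∧ ∀ x ∈ Set.Icc (0:ℝ) 1, R γ ≤ R x := by
  have hRfun : R = fun γ => 2 / q * Real.arctan (q * γ)
      + 2 * (1 - γ)^3 / (M^2 + (1 - γ)^2) := funext hR
  set P : ℝ → ℝ := fun γ => M^4 - M^2*(1-γ)^2 - q^2*γ^2*(1-γ)^4 - 3*M^2*q^2*γ^2*(1-γ)^2
    with hPdef
  -- derivative of R
  have hRd : ∀ x, HasDerivAt R (2 * P x / ((1+q^2*x^2) * (M^2+(1-x)^2)^2)) x := by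
    intro x
    rw [hRfun]
    exact R_aux_hasDeriv M q hM0 hq0 x
  have hRdiff : Differentiable ℝ R := fun x => (hRd x).differentiableAt
  have hDpos : ∀ x : ℝ, 0 < (1+q^2*x^2) * (M^2+(1-x)^2)^2 := by
    intro x; positivity
  -- P is strictly increasing on [0,1]
  have hPdiff : Differentiable ℝ P := fun x => (phi_aux_hasDeriv M q x).differentiableAt
  have hPmono : StrictMonoOn P (Set.Icc (0:ℝ) 1) := by
    apply strictMonoOn_of_deriv_pos (convex_Icc 0 1) hPdiff.continuous.continuousOn
    intro x hx
    rw [interior_Icc] at hx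
    rw [(phi_aux_hasDeriv M q x).deriv]
    exact phi_aux_deriv_pos M q x hM0 hM1 hq0 hq1 h2M hx.1 hx.2
  have hP0 : P 0 < 0 := by
    simp only [hPdef]
    norm_num
    have h : M^2 < 1 := by nlinarith
    nlinarith [mul_pos hM0 hM0]
  have hP1 : 0 < P 1 := by
    simp only [hPdef]
    norm_num
    positivity
  -- root of P
  obtain ⟨c, hcmem, hPc⟩ : ∃ c ∈ Set.Icc (0:ℝ) 1, P c = 0 := by
    have h := intermediate_value_Icc (by norm_num : (0:ℝ) ≤ 1)
      hPdiff.continuous.continuousOn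
    have h0 : (0:ℝ) ∈ Set.Icc (P 0) (P 1) := ⟨le_of_lt hP0, le_of_lt hP1⟩
    obtain ⟨c, hc, hc'⟩ := h h0
    exact ⟨c, hc, hc'⟩
  have hc0 : 0 < c := by
    rcases lt_or_eq_of_le hcmem.1 with h | h
    · exact h
    · exfalso; rw [← h] at hPc; linarith
  have hc1 : c < 1 := by
    rcases lt_or_eq_of_le hcmem.2 with h | h
    · exact h
    · exfalso; rw [h] at hPc; linarith
  -- sign of P
  have hPneg : ∀ x ∈ Set.Icc (0:ℝ) 1, x < c → P x < 0 := by
    intro x hx hxc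
    have := hPmono hx hcmem hxc
    linarith
  have hPpos : ∀ x ∈ Set.Icc (0:ℝ) 1, c < x → 0 < P x := by
    intro x hx hxc
    have := hPmono hcmem hx hxc
    linarith
  -- R strictly decreasing on [0,c], strictly increasing on [c,1]
  have hRanti : StrictAntiOn R (Set.Icc (0:ℝ) c) := by
    apply strictAntiOn_of_deriv_neg (convex_Icc 0 c) hRdiff.continuous.continuousOn
    intro x hx
    rw [interior_Icc] at hx
    rw [(hRd x).deriv]
    apply div_neg_of_neg_of_pos _ (hDpos x)
    have : P x < 0 := hPneg x ⟨le_of_lt hx.1, le_trans (le_of_lt hx.2) hcmem.2⟩ hx.2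
    linarith
  have hRmono : StrictMonoOn R (Set.Icc c 1) := by
    apply strictMonoOn_of_deriv_pos (convex_Icc c 1) hRdiff.continuous.continuousOn
    intro x hx
    rw [interior_Icc] at hx
    rw [(hRd x).deriv]
    apply div_pos _ (hDpos x)
    have : 0 < P x := hPpos x ⟨le_trans hcmem.1 (le_of_lt hx.1), le_of_lt hx.2⟩ hx.1
    linarith
  -- c is the minimizer
  have hmin : ∀ x ∈ Set.Icc (0:ℝ) 1, R c ≤ R x := by
    intro x hx
    rcases lt_trichotomy x c with h | h | h
    · exact le_of_lt (hRanti ⟨hx.1, le_of_lt h⟩ ⟨le_of_lt hc0, le_refl c⟩ h)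
    · rw [h]
    · exact le_of_lt (hRmono ⟨le_refl c, le_of_lt hc1⟩ ⟨le_of_lt h, hx.2⟩ h)
  refine ⟨c, ⟨⟨hc0, hc1⟩, hmin⟩, ?_⟩
  rintro y ⟨⟨hy0, hy1⟩, hymin⟩
  by_contra hne
  have hyIcc : y ∈ Set.Icc (0:ℝ) 1 := ⟨le_of_lt hy0, le_of_lt hy1⟩
  have hcIcc : c ∈ Set.Icc (0:ℝ) 1 := hcmem
  have heq : R y = R c := le_antisymm (hymin c hcIcc) (hmin y hyIcc)
  rcases lt_or_gt_of_ne hne with h | h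
  · have := hRanti ⟨hyIcc.1, le_of_lt h⟩ ⟨le_of_lt hc0, le_refl c⟩ h
    linarith
  · have := hRmono ⟨le_refl c, le_of_lt hc1⟩ ⟨le_of_lt h, hyIcc.2⟩ h
    linarith
end

section
/- Let M ≥ 1, q ∈ (0,1] with 2M ≥ q, and define R_{M;q}(γ) = (2/q) arctan(qγ) + 2(1−γ)³/(M² + (1−γ)²). Then R_{M;q} attains its minimum over [0,1] uniquely at γ = 0, with minimal value 2/(1+M²). -/
private lemma R_hasDerivAt (M q : ℝ) (hM : 1 ≤ M) (hq0 : 0 < q) (γ : ℝ) :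
    HasDerivAt (fun γ => 2 / q * Real.arctan (q * γ)
        + 2 * (1 - γ)^3 / (M^2 + (1 - γ)^2))
      (2 / q * (1 / (1 + (q * γ)^2) * q)
        + ((-6 * (1 - γ)^2) * (M^2 + (1 - γ)^2)
            - 2 * (1 - γ)^3 * (-2 * (1 - γ))) / (M^2 + (1 - γ)^2)^2) γ := by
  have hd : (0:ℝ) < M^2 + (1 - γ)^2 := by nlinarith
  have h1 : HasDerivAt (fun γ : ℝ => q * γ) q γ := by
    simpa using (hasDerivAt_id γ).const_mul q
  have h2 : HasDerivAt (fun γ : ℝ => Real.arctan (q * γ))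
      (1 / (1 + (q * γ)^2) * q) γ :=
    (Real.hasDerivAt_arctan (q * γ)).comp γ h1
  have h3 : HasDerivAt (fun γ : ℝ => 1 - γ) (-1) γ := by
    simpa using (hasDerivAt_id γ).const_sub 1
  have hn : HasDerivAt (fun γ : ℝ => 2 * (1 - γ)^3) (-6 * (1 - γ)^2) γ := by
    have := ((h3.fun_pow 3).const_mul 2)
    refine this.congr_deriv ?_
    ring
  have hden : HasDerivAt (fun γ : ℝ => M^2 + (1 - γ)^2) (-2 * (1 - γ)) γ := by
    have := (h3.fun_pow 2).const_add (M^2)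
    refine this.congr_deriv ?_
    ring
  exact (h2.const_mul (2 / q)).add (hn.div hden hd.ne')

/-- For M ≥ 1, q ∈ (0,1] with 2M ≥ q, the function
R_{M;q}(γ) = (2/q) arctan(qγ) + 2(1−γ)³/(M²+(1−γ)²) attains its minimum over
[0,1] uniquely at γ = 0, with minimal value 2/(1+M²). -/
theorem R_min_at_zero (M q : ℝ) (hM : 1 ≤ M) (hq0 : 0 < q) (hq1 : q ≤ 1)
    (h2M : q ≤ 2 * M)
    (R : ℝ → ℝ)
    (hR : ∀ γ, R γ = 2 / q * Real.arctan (q * γ)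
        + 2 * (1 - γ)^3 / (M^2 + (1 - γ)^2)) :
    R 0 = 2 / (1 + M^2) ∧ (∀ x ∈ Set.Icc (0:ℝ) 1, R 0 ≤ R x) ∧
      ∀ x ∈ Set.Icc (0:ℝ) 1, x ≠ 0 → R 0 < R x := by
  have hReq : R = fun γ => 2 / q * Real.arctan (q * γ)
      + 2 * (1 - γ)^3 / (M^2 + (1 - γ)^2) := funext hR
  have hval : R 0 = 2 / (1 + M^2) := by
    rw [hR 0]
    simp [Real.arctan_zero]
    rw [add_comm (M^2) 1]
  have hmono : StrictMonoOn R (Set.Icc 0 1) := by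
    have hcont : ContinuousOn R (Set.Icc 0 1) := by
      rw [hReq]
      exact fun x _ => (R_hasDerivAt M q hM hq0 x).continuousAt.continuousWithinAt
    apply strictMonoOn_of_deriv_pos (convex_Icc 0 1) hcont
    intro γ hγ
    rw [interior_Icc] at hγ
    obtain ⟨hγ0, hγ1⟩ := hγ
    have hD := R_hasDerivAt M q hM hq0 γ
    rw [← hReq] at hD
    rw [hD.deriv]
    have hA : (0:ℝ) < 1 + (q * γ)^2 := by positivity
    have hB : (0:ℝ) < M^2 + (1 - γ)^2 := by nlinarith
    have hfirst : 2 / q * (1 / (1 + (q * γ)^2) * q) = 2 / (1 + (q * γ)^2) := by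
      field_simp
    rw [hfirst]
    have hM2 : (1:ℝ) ≤ M^2 := by nlinarith
    have hq2 : q^2 ≤ 1 := by nlinarith
    have hq2γ : q^2 * γ^2 ≤ γ^2 := by nlinarith [mul_le_mul_of_nonneg_right hq2 (sq_nonneg γ)]
    have hu2 : (1 - γ)^2 ≤ 1 := by nlinarith
    have hu4 : (1 - γ)^4 ≤ 1 := by nlinarith [sq_nonneg ((1-γ)^2), sq_nonneg (1-γ)]
    have hkey : 1 ≤ 2 - γ - 3*γ*(1-γ)^2 := by
      nlinarith [mul_nonneg (by linarith : (0:ℝ) ≤ 1 - γ) (sq_nonneg (3*γ - 3/2))]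
    have step : 0 < γ * (M^2 * (2 - γ - 3*γ*(1-γ)^2) - γ*(1-γ)^4) := by
      apply mul_pos hγ0
      nlinarith [hkey, hu4, hM2]
    rw [div_add_div _ _ (ne_of_gt hA) (ne_of_gt (pow_pos hB 2))]
    apply div_pos
    · nlinarith [step, mul_nonneg (sub_nonneg.2 hq2γ) (sq_nonneg ((1-γ)^2)),
        mul_nonneg (mul_nonneg (sq_nonneg M) (sub_nonneg.2 hq2γ)) (sq_nonneg (1-γ)),
        mul_nonneg (sq_nonneg M) (by nlinarith : (0:ℝ) ≤ M^2 - 1)]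
    · positivity
  refine ⟨hval, ?_, ?_⟩
  · intro x hx
    rcases eq_or_lt_of_le hx.1 with h | h
    · rw [← h]
    · exact le_of_lt (hmono (by simp) hx h)
  · intro x hx hne
    exact hmono (by simp) hx (lt_of_le_of_ne hx.1 (Ne.symm hne))
end

section
/- Let q > 0 and 0 ≤ α ≤ β. Then ∫_α^β r/(1 + q²(r−β)²) dr ≥ ∫_α^β r/(1 + q²(r−α)²) dr, with equality if and only if α = β. -/
open Real

lemma radial_integ (q c a b : ℝ) (hq : 0 < q) :
    ∫ r in a..b, r / (1 + q^2 * (r - c)^2) =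
      (Real.log (1 + q^2*(b-c)^2)/(2*q^2) + (c/q) * Real.arctan (q*(b-c)))
      - (Real.log (1 + q^2*(a-c)^2)/(2*q^2) + (c/q) * Real.arctan (q*(a-c))) := by
  have hden : ∀ x : ℝ, 0 < 1 + q^2*(x-c)^2 := fun x => by positivity
  apply intervalIntegral.integral_eq_sub_of_hasDerivAt
  · intro x hx
    have h1 : HasDerivAt (fun r : ℝ => 1 + q^2*(r-c)^2) (q^2 * (2*(x-c))) x := by
      have h0 : HasDerivAt (fun r : ℝ => (r-c)^2) (2*(x-c)) x := by
        simpa using ((hasDerivAt_id x).sub_const c).fun_pow 2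
      simpa using (h0.const_mul (q^2)).const_add 1
    have h2 : HasDerivAt (fun r : ℝ => Real.log (1 + q^2*(r-c)^2))
        ((q^2 * (2*(x-c))) / (1 + q^2*(x-c)^2)) x := h1.log (hden x).ne'
    have h3 : HasDerivAt (fun r : ℝ => q*(r-c)) q x := by
      simpa using ((hasDerivAt_id x).sub_const c).const_mul q
    have h4 : HasDerivAt (fun r : ℝ => Real.arctan (q*(r-c)))
        (1/(1+(q*(x-c))^2) * q) x := h3.arctan
    have h5 := (h2.div_const (2*q^2)).add (h4.const_mul (c/q))
    convert h5 using 1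
    · rfl
    have hsq : (q*(x-c))^2 = q^2*(x-c)^2 := by ring
    rw [hsq]
    have := (hden x).ne'
    field_simp
    ring
  · apply Continuous.intervalIntegrable
    exact continuous_id.div (by continuity) (fun x => (hden x).ne')

lemma psi_pos {t : ℝ} (ht : 0 < t) : t/(1+t^2) < Real.arctan t := by
  have hden : ∀ x : ℝ, 0 < 1 + x^2 := fun x => by positivity
  have key : StrictMonoOn (fun s : ℝ => Real.arctan s - s/(1+s^2)) (Set.Ici 0) := by
    apply strictMonoOn_of_deriv_pos (convex_Ici 0)
    · exact (Real.continuous_arctan.sub (continuous_id.div (by continuity)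
        (fun x => (hden x).ne'))).continuousOn
    · intro x hx
      rw [interior_Ici] at hx
      have h1 : HasDerivAt (fun s : ℝ => 1 + s^2) (2*x) x := by
        simpa using ((hasDerivAt_id x).pow 2).const_add 1
      have h2 : HasDerivAt (fun s : ℝ => s/(1+s^2))
          ((1*(1+x^2) - x*(2*x))/(1+x^2)^2) x :=
        (hasDerivAt_id x).div h1 (hden x).ne'
      have h3 := (Real.hasDerivAt_arctan x).fun_sub h2
      rw [h3.deriv]
      have h4 : 1/(1+x^2) - (1*(1+x^2) - x*(2*x))/(1+x^2)^2 = 2*x^2/(1+x^2)^2 := by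
        have := (hden x).ne'
        field_simp
        ring
      rw [h4]
      exact div_pos (mul_pos two_pos (pow_pos hx 2)) (pow_pos (hden x) 2)
  have h0 : (fun s : ℝ => Real.arctan s - s/(1+s^2)) 0 = 0 := by simp
  have := key (Set.self_mem_Ici) (Set.mem_Ici.mpr ht.le) ht
  rw [h0] at this
  linarith [this]

lemma phi_pos {t : ℝ} (ht : 0 < t) :
    0 < t * Real.arctan t - Real.log (1+t^2) := by
  have hden : ∀ x : ℝ, 0 < 1 + x^2 := fun x => by positivity
  have key : StrictMonoOn (fun s : ℝ => s * Real.arctan s - Real.log (1+s^2))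
      (Set.Ici 0) := by
    apply strictMonoOn_of_deriv_pos (convex_Ici 0)
    · apply Continuous.continuousOn
      exact (continuous_id.mul Real.continuous_arctan).sub
        ((by continuity : Continuous fun s : ℝ => 1 + s^2).log (fun x => (hden x).ne'))
    · intro x hx
      rw [interior_Ici] at hx
      have h1 : HasDerivAt (fun s : ℝ => 1 + s^2) (2*x) x := by
        simpa using ((hasDerivAt_id x).pow 2).const_add 1
      have h2 : HasDerivAt (fun s : ℝ => Real.log (1+s^2)) ((2*x)/(1+x^2)) x :=
        h1.log (hden x).ne'
      have h3 : HasDerivAt (fun s : ℝ => s * Real.arctan s)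
          (1 * Real.arctan x + x * (1/(1+x^2))) x :=
        (hasDerivAt_id x).mul (Real.hasDerivAt_arctan x)
      have h4 := h3.fun_sub h2
      rw [h4.deriv]
      have h5 : 1 * Real.arctan x + x * (1/(1+x^2)) - (2*x)/(1+x^2)
          = Real.arctan x - x/(1+x^2) := by
        have := (hden x).ne'
        field_simp
        ring
      rw [h5]
      linarith [psi_pos hx]
  have h0 : (fun s : ℝ => s * Real.arctan s - Real.log (1+s^2)) 0 = 0 := by simp
  have := key (Set.self_mem_Ici) (Set.mem_Ici.mpr ht.le) ht
  rw [h0] at this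
  simpa using this

/-- Radial parallelogram rule: for q > 0 and 0 ≤ α ≤ β,
∫_α^β r/(1+q²(r−β)²) dr ≥ ∫_α^β r/(1+q²(r−α)²) dr, with equality iff α = β. -/
theorem radial_parallelogram_rule (q α β : ℝ) (hq : 0 < q) (hα : 0 ≤ α)
    (hαβ : α ≤ β) :
    (∫ r in α..β, r / (1 + q^2 * (r - α)^2)) ≤
        (∫ r in α..β, r / (1 + q^2 * (r - β)^2)) ∧
      ((∫ r in α..β, r / (1 + q^2 * (r - β)^2)) =
          (∫ r in α..β, r / (1 + q^2 * (r - α)^2)) ↔ α = β) := by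
  set t : ℝ := q * (β - α) with ht_def
  have hq2 : (0:ℝ) < q^2 := by positivity
  have ht0 : 0 ≤ t := by
    have : 0 ≤ β - α := by linarith
    positivity
  have hIβ : (∫ r in α..β, r / (1 + q^2 * (r - β)^2))
      = (β/q) * Real.arctan t - Real.log (1 + t^2)/(2*q^2) := by
    rw [radial_integ q β α β hq]
    have h1 : q*(α-β) = -t := by rw [ht_def]; ring
    have h2 : 1 + q^2*(α-β)^2 = 1 + t^2 := by rw [ht_def]; ring
    simp [h1, h2, Real.arctan_neg]
    ring
  have hIα : (∫ r in α..β, r / (1 + q^2 * (r - α)^2))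
      = (α/q) * Real.arctan t + Real.log (1 + t^2)/(2*q^2) := by
    rw [radial_integ q α α β hq]
    have h2 : 1 + q^2*(β-α)^2 = 1 + t^2 := by rw [ht_def]; ring
    simp [ht_def, h2]
    ring
  have hD : (∫ r in α..β, r / (1 + q^2 * (r - β)^2))
      - (∫ r in α..β, r / (1 + q^2 * (r - α)^2))
      = (t * Real.arctan t - Real.log (1 + t^2)) / q^2 := by
    rw [hIβ, hIα, ht_def]
    field_simp
    ring
  have hphi : 0 ≤ t * Real.arctan t - Real.log (1 + t^2) := by
    rcases eq_or_lt_of_le ht0 with h | h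
    · simp [← h]
    · exact (phi_pos h).le
  constructor
  · nlinarith [hD, div_nonneg hphi hq2.le]
  · constructor
    · intro heq
      by_contra hne
      have hlt : α < β := lt_of_le_of_ne hαβ hne
      have htpos : 0 < t := by
        rw [ht_def]; exact mul_pos hq (by linarith)
      have := phi_pos htpos
      have : 0 < (t * Real.arctan t - Real.log (1 + t^2)) / q^2 := by positivity
      rw [← hD] at this
      linarith
    · intro heq
      subst heq
      simp
end

section
/- Let Ω ⊂ ℝⁿ be an open bounded convex set, q ≥ 0 with q·diam(Ω) ≤ 2, and let u : Ω → ℝ be q-concave (i.e., x ↦ u(x) − (q/2)|x|² is concave). Then u satisfies the single shock property: for a.e. x ∈ Ω and every τ > 0 with x − τ∇u(x) ∈ Ω, one has u(x − τ∇u(x)) ≤ u(x) + (τ/2)(1 − |∇u(x)|²). -/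
open MeasureTheory Set Filter

open scoped RealInnerProductSpace Topology

section Aux

variable {E : Type*} [NormedAddCommGroup E] [InnerProductSpace ℝ E]

/-- Parallelogram-type identity for convex combinations. -/
lemma qcss_norm_combo (x y : E) (t : ℝ) :
    ‖x + t • (y - x)‖ ^ 2
      = (1 - t) * ‖x‖ ^ 2 + t * ‖y‖ ^ 2 - t * (1 - t) * ‖y - x‖ ^ 2 := by
  have h : ∀ a : E, ‖a‖ ^ 2 = ⟪a, a⟫ := fun a => (real_inner_self_eq_norm_sq a).symm
  simp only [h]
  simp only [inner_add_left, inner_add_right, inner_sub_left, inner_sub_right,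
    real_inner_smul_left, real_inner_smul_right, real_inner_comm y x]
  ring

/-- Subgradient-type inequality for `q`-concave functions at differentiability points. -/
lemma qcss_subgrad {Ω : Set E} (hconv : Convex ℝ Ω) {q : ℝ} (hq : 0 ≤ q)
    {u : E → ℝ} (hconc : ConcaveOn ℝ Ω (fun x => u x - q / 2 * ‖x‖ ^ 2))
    {x : E} (hx : x ∈ Ω) {f : E →L[ℝ] ℝ} (hf : HasFDerivAt u f x)
    {y : E} (hy : y ∈ Ω) :
    u y ≤ u x + f (y - x) + q / 2 * ‖y - x‖ ^ 2 := by
  have hline : HasDerivAt (fun t : ℝ => x + t • (y - x)) (y - x) 0 := by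
    simpa using ((hasDerivAt_id (0 : ℝ)).smul_const (y - x)).const_add x
  have hφ : HasDerivAt (fun t : ℝ => u (x + t • (y - x))) (f (y - x)) 0 := by
    have hf' : HasFDerivAt u f (x + (0 : ℝ) • (y - x)) := by simpa using hf
    exact hf'.comp_hasDerivAt 0 hline
  have hslope : Tendsto (slope (fun t : ℝ => u (x + t • (y - x))) 0) (𝓝[>] 0)
      (𝓝 (f (y - x))) :=
    (hasDerivAt_iff_tendsto_slope.1 hφ).mono_left
      (nhdsWithin_mono _ fun t ht => ne_of_gt ht)
  have key : u y - u x - q / 2 * ‖y - x‖ ^ 2 ≤ f (y - x) := by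
    refine ge_of_tendsto hslope ?_
    have hIoc : Ioc (0 : ℝ) 1 ∈ 𝓝[>] (0 : ℝ) := Ioc_mem_nhdsGT_of_mem (by simp)
    filter_upwards [hIoc] with t ht
    have ht0 : 0 < t := ht.1
    have hzΩ : x + t • (y - x) ∈ Ω := by
      have := hconv hx hy (by linarith [ht.2] : (0:ℝ) ≤ 1 - t) ht0.le (by ring)
      have heq : (1 - t) • x + t • y = x + t • (y - x) := by module
      rwa [heq] at this
    have hcc := hconc.2 hx hy (by linarith [ht.2] : (0:ℝ) ≤ 1 - t) ht0.le (by ring)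
    have heq : (1 - t) • x + t • y = x + t • (y - x) := by module
    rw [heq] at hcc
    simp only [smul_eq_mul] at hcc
    have hn := qcss_norm_combo x y t
    -- from hcc and hn : u (x + t•(y-x)) ≥ (1-t) u x + t u y - q/2 * t(1-t) ‖y-x‖²
    have hz : u (x + t • (y - x))
        ≥ (1 - t) * u x + t * u y - q / 2 * (t * (1 - t)) * ‖y - x‖ ^ 2 := by
      nlinarith [hcc, hn]
    rw [slope_def_field]
    simp only [zero_smul, add_zero, sub_zero]
    rw [le_div_iff₀ ht0]
    nlinarith [mul_nonneg hq (mul_nonneg (mul_nonneg ht0.le ht0.le) (sq_nonneg ‖y - x‖))]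
  linarith

end Aux

/-- A q-concave function on a bounded open convex set Ω ⊂ ℝⁿ with
q·diam(Ω) ≤ 2 has the single shock property: it is a.e. differentiable
and u(x − τ∇u(x)) ≤ u(x) + (τ/2)(1 − |∇u(x)|²) a.e. in Ω for all admissible
τ > 0. -/
theorem qconcave_single_shock (n : ℕ) (Ω : Set (EuclideanSpace ℝ (Fin n)))
    (hopen : IsOpen Ω) (hbdd : Bornology.IsBounded Ω) (hconv : Convex ℝ Ω)
    (q : ℝ) (hq : 0 ≤ q) (hdiam : q * Metric.diam Ω ≤ 2)
    (u : EuclideanSpace ℝ (Fin n) → ℝ)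
    (hconc : ConcaveOn ℝ Ω (fun x => u x - q / 2 * ‖x‖^2)) :
    ∀ᵐ x ∂(volume : Measure (EuclideanSpace ℝ (Fin n))), x ∈ Ω →
      DifferentiableAt ℝ u x ∧
      ∀ τ : ℝ, 0 < τ → x - τ • gradient u x ∈ Ω →
        u (x - τ • gradient u x) ≤ u x + τ / 2 * (1 - ‖gradient u x‖^2) := by
  set v : EuclideanSpace ℝ (Fin n) → ℝ := fun x => u x - q / 2 * ‖x‖ ^ 2 with hv
  -- u is differentiable wherever v is
  have hvu : ∀ x, DifferentiableAt ℝ v x → DifferentiableAt ℝ u x := by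
    intro x hvx
    have hns : DifferentiableAt ℝ (fun z : EuclideanSpace ℝ (Fin n) => ‖z‖ ^ 2) x :=
      ((contDiff_norm_sq ℝ (n := 1)).differentiable one_ne_zero).differentiableAt
    have : DifferentiableAt ℝ (fun z => v z + q / 2 * ‖z‖ ^ 2) x :=
      hvx.add (hns.const_mul (q / 2))
    convert this using 1
    funext z
    simp [hv]
  -- a.e. differentiability
  have hdiffae : ∀ᵐ x ∂(volume : Measure (EuclideanSpace ℝ (Fin n))),
      x ∈ Ω → DifferentiableAt ℝ u x := by
    rw [ae_iff]
    have hset : {x : EuclideanSpace ℝ (Fin n) | ¬(x ∈ Ω → DifferentiableAt ℝ u x)}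
        = {x | x ∈ Ω ∧ ¬DifferentiableAt ℝ u x} := by
      ext x; simp [Classical.not_imp]
    rw [hset]
    apply measure_null_of_locally_null
    rintro x ⟨hxΩ, -⟩
    obtain ⟨K, t, htx, hLip⟩ := (hconc.locallyLipschitzOn hopen) hxΩ
    rw [nhdsWithin_eq_nhds.2 (hopen.mem_nhds hxΩ)] at htx
    set U : Set (EuclideanSpace ℝ (Fin n)) := interior t ∩ Ω with hU
    have hUopen : IsOpen U := isOpen_interior.inter hopen
    have hxU : x ∈ U := ⟨mem_interior_iff_mem_nhds.2 htx, hxΩ⟩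
    have hLipU : LipschitzOnWith K v U :=
      hLip.mono (fun z hz => interior_subset hz.1)
    have hae : ∀ᵐ z ∂(volume : Measure (EuclideanSpace ℝ (Fin n))),
        z ∈ U → DifferentiableAt ℝ u z := by
      filter_upwards [hLipU.ae_differentiableWithinAt_of_mem] with z hz hzU
      exact hvu z ((hz hzU).differentiableAt (hUopen.mem_nhds hzU))
    refine ⟨{x | x ∈ Ω ∧ ¬DifferentiableAt ℝ u x} ∩ U,
      inter_mem_nhdsWithin _ (hUopen.mem_nhds hxU), ?_⟩
    rw [ae_iff] at hae
    apply measure_mono_null _ hae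
    rintro z ⟨⟨-, hznd⟩, hzU⟩
    simp only [mem_setOf_eq, Classical.not_imp]
    exact ⟨hzU, hznd⟩
  filter_upwards [hdiffae] with x hdx hxΩ
  have hdiff : DifferentiableAt ℝ u x := hdx hxΩ
  refine ⟨hdiff, ?_⟩
  intro τ hτ hyΩ
  set g : EuclideanSpace ℝ (Fin n) := gradient u x with hg
  set y : EuclideanSpace ℝ (Fin n) := x - τ • g with hy
  have hf : HasFDerivAt u (fderiv ℝ u x) x := hdiff.hasFDerivAt
  have hsub := qcss_subgrad hconv hq hconc hxΩ hf hyΩ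
  have hyx : y - x = -(τ • g) := by rw [hy]; abel
  have hfg : (fderiv ℝ u x) (y - x) = -(τ * ‖g‖ ^ 2) := by
    have hgw : ⟪g, g⟫ = (fderiv ℝ u x) g := by
      rw [hg, gradient]; exact InnerProductSpace.toDual_symm_apply
    rw [hyx, map_neg, ContinuousLinearMap.map_smul, smul_eq_mul, ← hgw, real_inner_self_eq_norm_sq]
  have hnyx : ‖y - x‖ = τ * ‖g‖ := by
    rw [hyx, norm_neg, norm_smul, Real.norm_eq_abs, abs_of_pos hτ]
  have hdist : τ * ‖g‖ ≤ Metric.diam Ω := by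
    have := Metric.dist_le_diam_of_mem hbdd hxΩ hyΩ
    rwa [dist_eq_norm, show x - y = τ • g by rw [hy]; abel, norm_smul,
      Real.norm_eq_abs, abs_of_pos hτ] at this
  have h2 : q * (τ * ‖g‖) ≤ 2 :=
    le_trans (mul_le_mul_of_nonneg_left hdist hq) hdiam
  rw [hfg, hnyx] at hsub
  have hr : (0:ℝ) ≤ ‖g‖ := norm_nonneg g
  nlinarith [mul_nonneg hτ.le (sq_nonneg (‖g‖ - 1)),
    mul_le_mul_of_nonneg_right h2 (mul_nonneg hτ.le hr)]
end

section
/- Let a < b and let u : [a,b] → ℝ be a concave, nonincreasing, continuous function with u(a) > u(b). Then there exists c ∈ [a,b) with u(a) − u(b) ≥ b − c such that ∫_a^b dx/(1+u'(x)²) ≥ ∫_a^b dx/(1 + (v')²), where v is the function equal to u(a) on [a,c] and equal to the affine function interpolating (c, u(a)) and (b, u(b)) on (c,b]. -/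
open MeasureTheory Set Filter intervalIntegral

lemma antitone_deriv_nonpos {U : ℝ → ℝ} (hU : Antitone U) (x : ℝ) : deriv U x ≤ 0 := by
  by_cases hd : DifferentiableAt ℝ U x
  · have h1 : Tendsto (slope U x) (nhdsWithin x (Set.Ioi x)) (nhds (deriv U x)) :=
      (hasDerivAt_iff_tendsto_slope.1 hd.hasDerivAt).mono_left
        (nhdsWithin_mono x (fun y hy => ne_of_gt hy))
    refine le_of_tendsto h1 ?_
    filter_upwards [self_mem_nhdsWithin] with y hy
    have h2 : U y ≤ U x := hU (le_of_lt hy)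
    have h3 : (0:ℝ) < y - x := sub_pos.2 hy
    rw [slope_def_field]
    exact div_nonpos_of_nonpos_of_nonneg (by linarith) h3.le
  · rw [deriv_zero_of_not_differentiableAt hd]

lemma antitone_key (a b : ℝ) (hab : a < b) (u : ℝ → ℝ)
    (hmono : AntitoneOn u (Set.Icc a b)) :
    IntervalIntegrable (deriv u) volume a b ∧
    u b - u a ≤ (∫ x in a..b, deriv u x) ∧
    ∀ x ∈ Set.Ioo a b, deriv u x ≤ 0 := by
  have hba : u b ≤ u a := hmono (left_mem_Icc.2 hab.le) (right_mem_Icc.2 hab.le) hab.le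
  set U : ℝ → ℝ := fun x => u (max a (min b x)) with hUdef
  have hmem : ∀ x, max a (min b x) ∈ Icc a b := fun x =>
    ⟨le_max_left _ _, max_le hab.le (min_le_left _ _)⟩
  have hU : Antitone U := fun x y hxy =>
    hmono (hmem x) (hmem y) (max_le_max le_rfl (min_le_min le_rfl hxy))
  have hUeq : ∀ x ∈ Icc a b, U x = u x := by
    intro x hx; simp only [hUdef]; rw [min_eq_right hx.2, max_eq_right hx.1]
  have hUb : ∀ x, b ≤ x → U x = u b := by
    intro x hx; simp only [hUdef]; rw [min_eq_left hx, max_eq_right hab.le]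
  have hUlb : ∀ x, u b ≤ U x := fun x => hmono (hmem x) (right_mem_Icc.2 hab.le) (hmem x).2
  have hUub : ∀ x, U x ≤ u a := fun x => hmono (left_mem_Icc.2 hab.le) (hmem x) (hmem x).1
  have hUmeas : Measurable U := by
    have : Monotone (fun x => -U x) := fun x y hxy => neg_le_neg (hU hxy)
    have h := this.measurable
    have : U = fun x => -(-U x) := by funext x; ring
    rw [this]; exact h.neg
  have hderiv_eq : ∀ x ∈ Ioo a b, deriv U x = deriv u x := by
    intro x hx
    have : U =ᶠ[nhds x] u :=
      Filter.eventuallyEq_of_mem (Ioo_mem_nhds hx.1 hx.2)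
        (fun y hy => hUeq y (Ioo_subset_Icc_self hy))
    exact this.deriv_eq
  have hnd : ∀ x ∈ Ioo a b, deriv u x ≤ 0 := fun x hx =>
    hderiv_eq x hx ▸ antitone_deriv_nonpos hU x
  -- bounded measurable functions are interval integrable
  have hbdd : ∀ (f : ℝ → ℝ) (C : ℝ), Measurable f → (∀ x, |f x| ≤ C) →
      ∀ p q : ℝ, IntervalIntegrable f volume p q := by
    intro f C hf hC p q
    rw [intervalIntegrable_iff]
    exact Integrable.mono' (integrableOn_const (C := C) measure_Ioc_lt_top.ne)
      hf.aestronglyMeasurable (ae_of_all _ fun x => by simpa using hC x)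
  have hUbd : ∀ x, |U x| ≤ max |u a| |u b| := by
    intro x
    rw [abs_le]
    constructor
    · calc -(max |u a| |u b|) ≤ -|u b| := neg_le_neg (le_max_right _ _)
        _ ≤ u b := neg_abs_le _
        _ ≤ U x := hUlb x
    · exact (hUub x).trans ((le_abs_self _).trans (le_max_left _ _))
  have hUint : ∀ p q : ℝ, IntervalIntegrable U volume p q := hbdd U _ hUmeas hUbd
  -- the difference quotient functions
  set φ : ℕ → ℝ → ℝ := fun n x => (U x - U (x + 1/(n+1))) * (n+1) with hφdef
  have hδpos : ∀ n : ℕ, (0:ℝ) < 1/(n+1) := fun n => by positivity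
  have hφmeas : ∀ n, Measurable (φ n) :=
    fun n => ((hUmeas.sub (hUmeas.comp (measurable_id.add_const _))).mul_const _)
  have hφnonneg : ∀ n x, 0 ≤ φ n x := by
    intro n x
    have : U (x + 1/(n+1)) ≤ U x := hU (by linarith [hδpos n])
    have h2 : (0:ℝ) ≤ (n:ℝ)+1 := by positivity
    exact mul_nonneg (by linarith) h2
  have hφbd : ∀ n x, |φ n x| ≤ (u a - u b) * (n+1) := by
    intro n x
    rw [abs_of_nonneg (hφnonneg n x)]
    have h1 : U x ≤ u a := hUub x
    have h2 : u b ≤ U (x + 1/(n+1)) := hUlb _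
    have h3 : (0:ℝ) ≤ (n:ℝ)+1 := by positivity
    exact mul_le_mul_of_nonneg_right (by linarith) h3
  -- integral of each φ n is at most u a - u b
  have hφbound : ∀ n, (∫ x in Ioo a b, φ n x) ≤ u a - u b := by
    intro n
    set δ : ℝ := 1/(n+1) with hδdef
    have hδ : 0 < δ := hδpos n
    have hUδint : ∀ p q : ℝ, IntervalIntegrable (fun x => U (x + δ)) volume p q :=
      hbdd _ _ (hUmeas.comp (measurable_id.add_const _)) (fun x => hUbd (x + δ))
    have e1 : (∫ x in a..b, U (x + δ)) = ∫ x in (a+δ)..(b+δ), U x :=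
      intervalIntegral.integral_comp_add_right U δ
    have e2 : (∫ x in a..(a+δ), U x) + ∫ x in (a+δ)..b, U x = ∫ x in a..b, U x :=
      integral_add_adjacent_intervals (hUint _ _) (hUint _ _)
    have e3 : (∫ x in (a+δ)..b, U x) + ∫ x in b..(b+δ), U x = ∫ x in (a+δ)..(b+δ), U x :=
      integral_add_adjacent_intervals (hUint _ _) (hUint _ _)
    have e4 : (∫ x in a..(a+δ), U x) ≤ δ * u a := by
      have h := intervalIntegral.integral_mono_on (by linarith : a ≤ a + δ)
        (hUint a (a+δ)) intervalIntegrable_const (fun x _ => hUub x)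
      simpa [intervalIntegral.integral_const, smul_eq_mul] using h
    have e5 : (∫ x in b..(b+δ), U x) = δ * u b := by
      rw [intervalIntegral.integral_congr (g := fun _ => u b) ?_,
        intervalIntegral.integral_const]
      · rw [smul_eq_mul]; ring
      · intro x hx
        rw [uIcc_of_le (by linarith : b ≤ b + δ)] at hx
        exact hUb x hx.1
    have e6 : (∫ x in a..b, φ n x) = ((∫ x in a..b, U x) - ∫ x in a..b, U (x + δ)) * (n+1) := by
      rw [← intervalIntegral.integral_sub (hUint a b) (hUδint a b),
        ← intervalIntegral.integral_mul_const]
    have e7 : (∫ x in Ioo a b, φ n x) = ∫ x in a..b, φ n x := by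
      rw [intervalIntegral.integral_of_le hab.le, integral_Ioc_eq_integral_Ioo]
    have hδn : δ * ((n:ℝ)+1) = 1 := by rw [hδdef]; field_simp
    have hn1 : (0:ℝ) ≤ (n:ℝ)+1 := by positivity
    calc (∫ x in Ioo a b, φ n x) = ((∫ x in a..b, U x) - ∫ x in a..b, U (x + δ)) * (n+1) := by
          rw [e7, e6]
      _ ≤ (δ * u a - δ * u b) * (n+1) := by
          apply mul_le_mul_of_nonneg_right _ hn1
          rw [e1]; nlinarith [e2, e3, e4, e5]
      _ = u a - u b := by
          have : (δ * u a - δ * u b) * (n+1) = (δ * (n+1)) * (u a - u b) := by ring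
          rw [this, hδn, one_mul]
  -- Fatou's lemma
  have hpoint : ∀ x, ENNReal.ofReal (-(deriv U x)) ≤
      liminf (fun n => ENNReal.ofReal (φ n x)) atTop := by
    intro x
    by_cases hd : DifferentiableAt ℝ U x
    · have hseq : Tendsto (fun n : ℕ => x + 1/(n+1)) atTop (nhds x) := by
        have h0 : Tendsto (fun n : ℕ => 1/((n:ℝ)+1)) atTop (nhds 0) :=
          tendsto_one_div_add_atTop_nhds_zero_nat
        simpa using tendsto_const_nhds.add h0
      have hseq' : Tendsto (fun n : ℕ => x + 1/(n+1)) atTop (nhdsWithin x {x}ᶜ) := by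
        refine tendsto_nhdsWithin_of_tendsto_nhds_of_eventually_within _ hseq ?_
        filter_upwards with n
        have := hδpos n
        simp only [Set.mem_compl_iff, Set.mem_singleton_iff]
        intro h; nlinarith [hδpos n, congrArg (fun t => t - x) h]
      have ht0 : Tendsto (fun n : ℕ => slope U x (x + 1/(n+1))) atTop (nhds (deriv U x)) :=
        (hasDerivAt_iff_tendsto_slope.1 hd.hasDerivAt).comp hseq'
      have ht : Tendsto (fun n => φ n x) atTop (nhds (-(deriv U x))) := by
        refine ht0.neg.congr (fun n => ?_)
        rw [slope_def_field]
        have h1 : x + 1/((n:ℝ)+1) - x = 1/((n:ℝ)+1) := by ring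
        rw [h1]
        rw [div_eq_mul_inv, one_div, inv_inv]
        simp only [hφdef, one_div]; ring
      have ht' : Tendsto (fun n => ENNReal.ofReal (φ n x)) atTop
          (nhds (ENNReal.ofReal (-(deriv U x)))) :=
        (ENNReal.continuous_ofReal.tendsto _).comp ht
      rw [ht'.liminf_eq]
    · simp [deriv_zero_of_not_differentiableAt hd]
  have hφint : ∀ n, IntegrableOn (φ n) (Ioo a b) volume := by
    intro n
    exact ((hbdd (φ n) _ (hφmeas n) (hφbd n) a b).1).mono_set Ioo_subset_Ioc_self
  have hFatou : (∫⁻ x in Ioo a b, ENNReal.ofReal (-(deriv U x))) ≤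
      ENNReal.ofReal (u a - u b) := by
    calc (∫⁻ x in Ioo a b, ENNReal.ofReal (-(deriv U x)))
        ≤ ∫⁻ x in Ioo a b, liminf (fun n => ENNReal.ofReal (φ n x)) atTop :=
          lintegral_mono (fun x => hpoint x)
      _ ≤ liminf (fun n => ∫⁻ x in Ioo a b, ENNReal.ofReal (φ n x)) atTop :=
          lintegral_liminf_le (fun n => (hφmeas n).ennreal_ofReal)
      _ ≤ ENNReal.ofReal (u a - u b) := by
          have hb : ∀ n, (∫⁻ x in Ioo a b, ENNReal.ofReal (φ n x)) ≤
              ENNReal.ofReal (u a - u b) := by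
            intro n
            rw [← ofReal_integral_eq_lintegral_ofReal (hφint n)
              (ae_of_all _ (fun x => hφnonneg n x))]
            exact ENNReal.ofReal_le_ofReal (hφbound n)
          calc liminf (fun n => ∫⁻ x in Ioo a b, ENNReal.ofReal (φ n x)) atTop
              ≤ liminf (fun _ : ℕ => ENNReal.ofReal (u a - u b)) atTop :=
                Filter.liminf_le_liminf (Filter.Eventually.of_forall hb)
            _ = ENNReal.ofReal (u a - u b) := Filter.liminf_const _
  have hg : (∫⁻ x in Ioo a b, ENNReal.ofReal (-(deriv u x))) ≤
      ENNReal.ofReal (u a - u b) := by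
    have heq : (∫⁻ x in Ioo a b, ENNReal.ofReal (-(deriv u x))) =
        ∫⁻ x in Ioo a b, ENNReal.ofReal (-(deriv U x)) := by
      apply setLIntegral_congr_fun measurableSet_Ioo
      exact fun x hx => by rw [hderiv_eq x hx]
    rw [heq]; exact hFatou
  have hmeasdu : Measurable (deriv u) := measurable_deriv u
  have hfin : (∫⁻ x in Ioo a b, (‖deriv u x‖₊ : ENNReal)) < ⊤ := by
    have heq : (∫⁻ x in Ioo a b, (‖deriv u x‖₊ : ENNReal)) =
        ∫⁻ x in Ioo a b, ENNReal.ofReal (-(deriv u x)) := by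
      apply setLIntegral_congr_fun measurableSet_Ioo
      refine fun x hx => ?_
      show ‖deriv u x‖ₑ = _
      rw [Real.enorm_eq_ofReal_abs, abs_of_nonpos (hnd x hx)]
    rw [heq]
    exact lt_of_le_of_lt hg ENNReal.ofReal_lt_top
  have hIntOo : IntegrableOn (deriv u) (Ioo a b) volume :=
    ⟨hmeasdu.aestronglyMeasurable, hfin⟩
  have hII : IntervalIntegrable (deriv u) volume a b := by
    rw [intervalIntegrable_iff_integrableOn_Ioc_of_le hab.le,
      ← integrableOn_Ioc_iff_integrableOn_Ioo (a := a) (b := b) (f := deriv u) (μ := volume)] at *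
    exact hIntOo
  refine ⟨hII, ?_, hnd⟩
  have h1 : (∫ x in a..b, deriv u x) = ∫ x in Ioo a b, deriv u x := by
    rw [intervalIntegral.integral_of_le hab.le, integral_Ioc_eq_integral_Ioo]
  have h2 : (∫ x in Ioo a b, (-(deriv u x))) =
      (∫⁻ x in Ioo a b, ENNReal.ofReal (-(deriv u x))).toReal := by
    apply integral_eq_lintegral_of_nonneg_ae
    · exact (ae_restrict_iff' measurableSet_Ioo).2
        (ae_of_all _ (fun x hx => neg_nonneg.2 (hnd x hx)))
    · exact hmeasdu.neg.aestronglyMeasurable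
  have h3 : (∫⁻ x in Ioo a b, ENNReal.ofReal (-(deriv u x))).toReal ≤ u a - u b := by
    have := ENNReal.toReal_mono ENNReal.ofReal_ne_top hg
    rwa [ENNReal.toReal_ofReal (by linarith)] at this
  have h4 : (∫ x in Ioo a b, (-(deriv u x))) = -∫ x in Ioo a b, deriv u x :=
    integral_neg _
  rw [h1]; linarith [h2 ▸ h3, h4]


lemma bdd_intervalIntegrable {f : ℝ → ℝ} {C : ℝ} (hf : Measurable f)
    (hC : ∀ x, |f x| ≤ C) (p q : ℝ) : IntervalIntegrable f volume p q := by
  rw [intervalIntegrable_iff]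
  exact Integrable.mono' (integrableOn_const measure_Ioc_lt_top.ne)
    hf.aestronglyMeasurable (ae_of_all _ fun x => by simpa using hC x)


/-- For a concave nonincreasing continuous u on [a,b] with u(a) > u(b), there
is c ∈ [a,b) with u(a) − u(b) ≥ b − c such that the resistance of u is at
least that of the profile which is flat at height u(a) on [a,c] and affine
from (c,u(a)) to (b,u(b)) on (c,b]. -/
theorem concave_flat_plus_line (a b : ℝ) (hab : a < b) (u : ℝ → ℝ)
    (hconc : ConcaveOn ℝ (Set.Icc a b) u)
    (hmono : AntitoneOn u (Set.Icc a b))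
    (hcont : ContinuousOn u (Set.Icc a b))
    (hend : u b < u a) :
    ∃ c ∈ Set.Ico a b, b - c ≤ u a - u b ∧
      (∫ x in a..b, 1 / (1 + (if x ≤ c then (0:ℝ)
          else (u b - u a) / (b - c))^2)) ≤
        ∫ x in a..b, 1 / (1 + deriv u x ^ 2) := by
  obtain ⟨hII, hval, hnd⟩ := antitone_key a b hab u hmono
  have hh : 0 < u a - u b := sub_pos.2 hend
  have hL : 0 < b - a := sub_pos.2 hab
  -- the RHS integrand
  set R : ℝ → ℝ := fun x => 1 / (1 + deriv u x ^ 2) with hRdef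
  have hRmeas : Measurable R :=
    measurable_const.div (measurable_const.add ((measurable_deriv u).pow_const 2))
  have hRbd : ∀ x, |R x| ≤ 1 := by
    intro x
    have h1 : (0:ℝ) < 1 + deriv u x ^ 2 := by positivity
    rw [abs_of_nonneg (by positivity)]
    rw [div_le_one h1]; nlinarith [sq_nonneg (deriv u x)]
  have hRint : IntervalIntegrable R volume a b := bdd_intervalIntegrable hRmeas hRbd a b
  -- generic transfer to Ioo
  have intOn : ∀ {f : ℝ → ℝ}, IntervalIntegrable f volume a b →
      IntegrableOn f (Ioo a b) volume := fun hf =>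
    ((intervalIntegrable_iff_integrableOn_Ioc_of_le hab.le).1 hf).mono_set Ioo_subset_Ioc_self
  have mono_int : ∀ (f g : ℝ → ℝ), IntervalIntegrable f volume a b →
      IntervalIntegrable g volume a b → (∀ x ∈ Ioo a b, f x ≤ g x) →
      (∫ x in a..b, f x) ≤ ∫ x in a..b, g x := by
    intro f g hf hg hfg
    rw [intervalIntegral.integral_of_le hab.le, integral_Ioc_eq_integral_Ioo,
      intervalIntegral.integral_of_le hab.le, integral_Ioc_eq_integral_Ioo]
    exact setIntegral_mono_on (intOn hf) (intOn hg) measurableSet_Ioo hfg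
  by_cases hcase : u a - u b ≤ b - a
  · -- flat piece exists: c = b - (u a - u b), slope = -1
    set c : ℝ := b - (u a - u b) with hcdef
    have hac : a ≤ c := by simp only [hcdef]; linarith
    have hcb : c < b := by simp only [hcdef]; linarith
    have hbc : b - c = u a - u b := by simp only [hcdef]; ring
    refine ⟨c, ⟨hac, hcb⟩, by rw [hbc], ?_⟩
    have hm : (u b - u a) / (b - c) = -1 := by
      rw [hbc, div_eq_iff (ne_of_gt hh)]; ring
    set F : ℝ → ℝ := fun x => 1 / (1 + (if x ≤ c then (0:ℝ)
      else (u b - u a) / (b - c))^2) with hFdef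
    have hF1 : ∀ x, x ≤ c → F x = 1 := by
      intro x hx; simp only [hFdef, if_pos hx]; norm_num
    have hF2 : ∀ x, ¬(x ≤ c) → F x = 1/2 := by
      intro x hx; simp only [hFdef, if_neg hx, hm]; norm_num
    have hFbd : ∀ x, |F x| ≤ 1 := by
      intro x
      by_cases hx : x ≤ c
      · rw [hF1 x hx]; norm_num
      · rw [hF2 x hx]; rw [abs_of_nonneg (by norm_num)]; norm_num
    have hFmeas : Measurable F := by
      apply Measurable.div measurable_const
      apply Measurable.add measurable_const
      exact (Measurable.ite (measurableSet_le measurable_id measurable_const)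
        measurable_const measurable_const).pow_const 2
    have hFint : ∀ p q : ℝ, IntervalIntegrable F volume p q :=
      bdd_intervalIntegrable hFmeas hFbd
    have hsplit : (∫ x in a..c, F x) + (∫ x in c..b, F x) = ∫ x in a..b, F x :=
      integral_add_adjacent_intervals (hFint a c) (hFint c b)
    have hv1 : (∫ x in a..c, F x) = c - a := by
      rw [intervalIntegral.integral_congr (g := fun _ => (1:ℝ)) ?_,
        intervalIntegral.integral_const]
      · rw [smul_eq_mul]; ring
      · intro x hx
        rw [uIcc_of_le hac] at hx
        exact hF1 x hx.2
    have hv2 : (∫ x in c..b, F x) = (b - c) / 2 := by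
      rw [intervalIntegral.integral_congr_ae (g := fun _ => (1:ℝ)/2) ?_,
        intervalIntegral.integral_const]
      · rw [smul_eq_mul]; ring
      · refine ae_of_all _ (fun x hx => ?_)
        rw [uIoc_of_le hcb.le] at hx
        exact hF2 x (not_le.2 hx.1)
    have hLHS : (∫ x in a..b, F x) = (c - a) + (b - c)/2 := by
      rw [← hsplit, hv1, hv2]
    -- lower bound for RHS
    have hG : IntervalIntegrable (fun x => 1 + deriv u x / 2) volume a b :=
      intervalIntegrable_const.add (hII.div_const 2)
    have hGval : (∫ x in a..b, (1 + deriv u x / 2)) =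
        (b - a) + (∫ x in a..b, deriv u x) / 2 := by
      rw [integral_add intervalIntegrable_const (hII.div_const 2),
        intervalIntegral.integral_const, intervalIntegral.integral_div]
      rw [smul_eq_mul, mul_one]
    have hstep : (∫ x in a..b, (1 + deriv u x / 2)) ≤ ∫ x in a..b, R x := by
      apply mono_int _ _ hG hRint
      intro x hx
      have ht : deriv u x ≤ 0 := hnd x hx
      set t := deriv u x
      have h1 : (0:ℝ) < 1 + t ^ 2 := by positivity
      rw [hRdef]
      rw [le_div_iff₀ h1]
      nlinarith [mul_nonneg (neg_nonneg.2 ht) (sq_nonneg (1 + t))]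
    show (∫ x in a..b, F x) ≤ ∫ x in a..b, R x
    rw [hLHS]
    have : (c - a) + (b - c)/2 ≤ (b - a) + (∫ x in a..b, deriv u x) / 2 := by
      rw [hbc]; linarith
    linarith [hGval ▸ hstep]
  · -- steep case: c = a
    push_neg at hcase
    refine ⟨a, ⟨le_refl a, hab⟩, by linarith, ?_⟩
    set m : ℝ := (u b - u a) / (b - a) with hmdef
    have hm1 : m ≤ -1 := by
      rw [hmdef, div_le_iff₀ hL]; linarith
    have hm0 : m < 0 := lt_of_le_of_lt hm1 (by norm_num)
    have hmden : (0:ℝ) < 1 + m ^ 2 := by positivity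
    have hkm : (b - a) * m = u b - u a := by
      rw [hmdef]; field_simp
    set k : ℝ := -2 * m / (1 + m ^ 2) ^ 2 with hkdef
    have hk0 : 0 ≤ k := by
      rw [hkdef]
      exact div_nonneg (by nlinarith) (by positivity)
    set F : ℝ → ℝ := fun x => 1 / (1 + (if x ≤ a then (0:ℝ)
      else (u b - u a) / (b - a))^2) with hFdef
    have hF2 : ∀ x, ¬(x ≤ a) → F x = 1 / (1 + m ^ 2) := by
      intro x hx; simp only [hFdef, if_neg hx, hmdef]
    have hLHS : (∫ x in a..b, F x) = (b - a) * (1 / (1 + m ^ 2)) := by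
      rw [intervalIntegral.integral_congr_ae (g := fun _ => 1/(1 + m^2)) ?_,
        intervalIntegral.integral_const, smul_eq_mul]
      refine ae_of_all _ (fun x hx => ?_)
      rw [uIoc_of_le hab.le] at hx
      exact hF2 x (not_le.2 hx.1)
    -- the tangent line minorant
    set G : ℝ → ℝ := fun x => (1 / (1 + m ^ 2) - k * m) + k * deriv u x with hGdef
    have hGint : IntervalIntegrable G volume a b :=
      intervalIntegrable_const.add (hII.const_mul k)
    have hGval : (∫ x in a..b, G x) =
        (b - a) * (1 / (1 + m ^ 2) - k * m) + k * (∫ x in a..b, deriv u x) := by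
      rw [hGdef]
      rw [integral_add intervalIntegrable_const (hII.const_mul k),
        intervalIntegral.integral_const, intervalIntegral.integral_const_mul, smul_eq_mul]
    have hstep : (∫ x in a..b, G x) ≤ ∫ x in a..b, R x := by
      apply mono_int _ _ hGint hRint
      intro x hx
      have ht : deriv u x ≤ 0 := hnd x hx
      set t := deriv u x
      have h1 : (0:ℝ) < 1 + t ^ 2 := by positivity
      rw [hRdef, hGdef]
      have key : 1 / (1 + t ^ 2) - ((1 / (1 + m ^ 2) - k * m) + k * t) =
          (t - m) ^ 2 * (m ^ 2 - 1 + 2 * m * t) / ((1 + t ^ 2) * (1 + m ^ 2) ^ 2) := by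
        rw [hkdef]
        field_simp
        ring
      have hnum : 0 ≤ (t - m) ^ 2 * (m ^ 2 - 1 + 2 * m * t) := by
        apply mul_nonneg (sq_nonneg _)
        nlinarith [mul_nonneg (neg_nonneg.2 hm0.le) (neg_nonneg.2 ht)]
      have : 0 ≤ 1 / (1 + t ^ 2) - ((1 / (1 + m ^ 2) - k * m) + k * t) := by
        rw [key]; positivity
      linarith
    show (∫ x in a..b, F x) ≤ ∫ x in a..b, R x
    rw [hLHS]
    have h2 : (b - a) * (1 / (1 + m ^ 2)) ≤ ∫ x in a..b, G x := by
      rw [hGval]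
      have h3 : k * (u b - u a) ≤ k * (∫ x in a..b, deriv u x) :=
        mul_le_mul_of_nonneg_left hval hk0
      nlinarith [hkm]
    linarith
end

section
/- Let M > 0, R > 0, and h : (−∞,−1] → ℝ defined by h(t) = −t/(1+t²)². Define φ(a) = −∫_a^R h⁻¹(a/(4r)) dr for a ∈ (0,R). Then φ is strictly decreasing on (0,R), with φ(a) → 0 as a → R and φ(a) → +∞ as a → 0, and consequently there is a unique a_M ∈ (0,R) with φ(a_M) = M. -/
open Set intervalIntegral MeasureTheory Filter

lemma hsm (h : ℝ → ℝ) (hdef : ∀ t, h t = -t / (1 + t^2)^2) :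
    StrictMonoOn h (Set.Iic (-1 : ℝ)) := by
  intro x hx y hy hxy
  simp only [Set.mem_Iic] at hx hy
  rw [hdef, hdef, div_lt_div_iff₀ (by positivity) (by positivity)]
  have hxy1 : 1 < x * y := by nlinarith
  have key : 0 < (y - x) * (x*y*(x^2 + x*y + y^2 + 2) - 1) := by
    apply mul_pos (by linarith)
    nlinarith [sq_nonneg (x+y), sq_nonneg (x-y)]
  nlinarith [key]

section Aux

variable {R : ℝ} (hR : 0 < R)
variable {h : ℝ → ℝ} (hdef : ∀ t, h t = -t / (1 + t^2)^2)
variable {hinv : ℝ → ℝ}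
variable (hinvspec : ∀ s ∈ Set.Ioc (0:ℝ) (1/4),
      hinv s ∈ Set.Iic (-1 : ℝ) ∧ h (hinv s) = s)

include hinvspec

lemma hinv_le : ∀ s ∈ Set.Ioc (0:ℝ) (1/4), hinv s ≤ -1 :=
  fun s hs => (hinvspec s hs).1

include hdef

lemma hinv_mono : ∀ s₁ ∈ Set.Ioc (0:ℝ) (1/4), ∀ s₂ ∈ Set.Ioc (0:ℝ) (1/4),
    s₁ ≤ s₂ → hinv s₁ ≤ hinv s₂ := by
  intro s₁ h1 s₂ h2 h12
  by_contra hc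
  push_neg at hc
  have := hsm h hdef (hinvspec s₂ h2).1 (hinvspec s₁ h1).1 hc
  rw [(hinvspec s₁ h1).2, (hinvspec s₂ h2).2] at this
  linarith

lemma hinv_strict : ∀ s₁ ∈ Set.Ioc (0:ℝ) (1/4), ∀ s₂ ∈ Set.Ioc (0:ℝ) (1/4),
    s₁ < s₂ → hinv s₁ < hinv s₂ := by
  intro s₁ h1 s₂ h2 h12
  by_contra hc
  push_neg at hc
  rcases eq_or_lt_of_le hc with he | hl
  · have := (hinvspec s₁ h1).2
    rw [← he, (hinvspec s₂ h2).2] at this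
    linarith
  · have := hsm h hdef (hinvspec s₂ h2).1 (hinvspec s₁ h1).1 hl
    rw [(hinvspec s₁ h1).2, (hinvspec s₂ h2).2] at this
    linarith

lemma hinv_small : ∀ K : ℝ, 1 ≤ K → ∀ s ∈ Set.Ioc (0:ℝ) (1/4), s ≤ h (-K) → hinv s ≤ -K := by
  intro K hK s hs hsK
  by_contra hc
  push_neg at hc
  have hKm : (-K : ℝ) ∈ Set.Iic (-1 : ℝ) := by simpa using hK
  have := hsm h hdef hKm (hinvspec s hs).1 hc
  rw [(hinvspec s hs).2] at this
  linarith

end Aux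

lemma mem_aux {a r R : ℝ} (ha : 0 < a) (har : a ≤ r) (hrR : r ≤ R) :
    a / (4 * r) ∈ Set.Ioc (0:ℝ) (1/4) := by
  have hr : 0 < r := lt_of_lt_of_le ha har
  constructor
  · positivity
  · rw [div_le_div_iff₀ (by positivity) (by norm_num)]
    linarith

example : True := trivial

section Aux2

variable {hinv : ℝ → ℝ}
variable (hmono : ∀ s₁ ∈ Set.Ioc (0:ℝ) (1/4), ∀ s₂ ∈ Set.Ioc (0:ℝ) (1/4),
    s₁ ≤ s₂ → hinv s₁ ≤ hinv s₂)
variable (hle : ∀ s ∈ Set.Ioc (0:ℝ) (1/4), hinv s ≤ -1)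

include hmono

lemma anti_aux {a c d R : ℝ} (ha : 0 < a) (hac : a ≤ c) (hcd : c ≤ d) (hdR : d ≤ R) :
    AntitoneOn (fun r => hinv (a / (4 * r))) (Set.Icc c d) := by
  intro r₁ h1 r₂ h2 h12
  exact hmono _ (mem_aux ha (hac.trans h2.1) (h2.2.trans hdR))
    _ (mem_aux ha (hac.trans h1.1) (h1.2.trans hdR))
    (div_le_div_of_nonneg_left ha.le
      (by have := lt_of_lt_of_le ha (hac.trans h1.1); linarith) (by linarith))

lemma integrable_aux {a c d R : ℝ} (ha : 0 < a) (hac : a ≤ c) (hcd : c ≤ d) (hdR : d ≤ R) :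
    IntervalIntegrable (fun r => hinv (a / (4 * r))) volume c d := by
  apply AntitoneOn.intervalIntegrable
  rw [Set.uIcc_of_le hcd]
  exact anti_aux hmono ha hac hcd hdR

include hle

lemma int_ub {a c d R : ℝ} (ha : 0 < a) (hac : a ≤ c) (hcd : c ≤ d) (hdR : d ≤ R) :
    (∫ r in c..d, hinv (a / (4 * r))) ≤ -(d - c) := by
  have := integral_mono_on (μ := volume) (f := fun r => hinv (a / (4 * r)))
    (g := fun _ => (-1 : ℝ)) hcd (integrable_aux hmono ha hac hcd hdR)
    intervalIntegrable_const
    (fun x hx => hle _ (mem_aux ha (hac.trans hx.1) (hx.2.trans hdR)))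
  simpa using this

lemma int_lb {a c d R : ℝ} (ha : 0 < a) (hac : a ≤ c) (hcd : c ≤ d) (hdR : d ≤ R) :
    (d - c) * hinv (a / (4 * R)) ≤ ∫ r in c..d, hinv (a / (4 * r)) := by
  have := integral_mono_on (μ := volume) (f := fun _ => hinv (a / (4 * R)))
    (g := fun r => hinv (a / (4 * r))) hcd intervalIntegrable_const
    (integrable_aux hmono ha hac hcd hdR)
    (fun x hx => hmono _ (mem_aux ha (hac.trans (hcd.trans hdR)) le_rfl)
      _ (mem_aux ha (hac.trans hx.1) (hx.2.trans hdR))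
      (div_le_div_of_nonneg_left ha.le
        (by have := lt_of_lt_of_le ha (hac.trans hx.1); linarith)
        (by have := hx.2.trans hdR; linarith)))
  simpa [smul_eq_mul] using this

end Aux2

section Aux3

variable {hinv : ℝ → ℝ}
variable (hmono : ∀ s₁ ∈ Set.Ioc (0:ℝ) (1/4), ∀ s₂ ∈ Set.Ioc (0:ℝ) (1/4),
    s₁ ≤ s₂ → hinv s₁ ≤ hinv s₂)
variable (hle : ∀ s ∈ Set.Ioc (0:ℝ) (1/4), hinv s ≤ -1)

include hmono

lemma subst_aux {a b R : ℝ} (ha : 0 < a) (hab : a ≤ b) (hbR : b ≤ R) :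
    (∫ r in b..R, hinv (b / (4 * r))) = (b / a) * ∫ x in a..(R * a / b), hinv (a / (4 * x)) := by
  have hb : 0 < b := lt_of_lt_of_le ha hab
  have hba : (b / a : ℝ) ≠ 0 := by positivity
  have key := integral_comp_mul_right (a := a) (b := R * a / b)
    (fun x => hinv (b / (4 * x))) hba
  have e1 : a * (b / a) = b := by field_simp
  have e2 : (R * a / b) * (b / a) = R := by field_simp
  have e3 : ∀ x : ℝ, b / (4 * (x * (b / a))) = a / (4 * x) := by
    intro x
    rcases eq_or_ne x 0 with rfl | hx
    · simp
    · field_simp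
  simp only [e3, e1, e2, smul_eq_mul] at key
  rw [key]
  field_simp

include hle

lemma gap_aux {φ : ℝ → ℝ} {R : ℝ} (hφ : ∀ a, φ a = -∫ r in a..R, hinv (a / (4 * r)))
    {x y : ℝ} (hx : 0 < x) (hxy : x ≤ y) (hyR : y ≤ R) : y - x ≤ φ x - φ y := by
  have hy : 0 < y := lt_of_lt_of_le hx hxy
  rw [hφ, hφ]
  have hsplit : (∫ r in x..R, hinv (x / (4 * r)))
      = (∫ r in x..y, hinv (x / (4 * r))) + ∫ r in y..R, hinv (x / (4 * r)) :=
    (integral_add_adjacent_intervals (integrable_aux hmono hx le_rfl hxy hyR)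
      (integrable_aux hmono hx hxy hyR le_rfl)).symm
  have hcomp : (∫ r in y..R, hinv (x / (4 * r))) ≤ ∫ r in y..R, hinv (y / (4 * r)) := by
    apply integral_mono_on hyR (integrable_aux hmono hx hxy hyR le_rfl)
      (integrable_aux hmono hy le_rfl hyR le_rfl)
    intro r hr
    have hr0 : 0 < r := lt_of_lt_of_le hy hr.1
    exact hmono _ (mem_aux hx (hxy.trans hr.1) hr.2) _ (mem_aux hy hr.1 hr.2)
      (div_le_div_of_nonneg_right hxy (by linarith))
  have hub := int_ub hmono hle hx le_rfl hxy hyR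
  rw [hsplit]
  linarith

lemma lip_aux {φ : ℝ → ℝ} {R : ℝ} (hφ : ∀ a, φ a = -∫ r in a..R, hinv (a / (4 * r)))
    {x y : ℝ} (hx : 0 < x) (hxy : x ≤ y) (hyR : y ≤ R) :
    φ x - φ y ≤ (R * (-(hinv (x / (4 * R)))) / x) * (y - x) := by
  have hy : 0 < y := lt_of_lt_of_le hx hxy
  have hR : 0 < R := lt_of_lt_of_le hy hyR
  set c := R * x / y with hc
  have hc1 : x ≤ c := by
    rw [hc, le_div_iff₀ hy]
    nlinarith
  have hc2 : c ≤ R := by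
    rw [hc, div_le_iff₀ hy]
    nlinarith
  have hsub := subst_aux hmono hx hxy hyR
  have hsplit : (∫ r in x..R, hinv (x / (4 * r)))
      = (∫ r in x..c, hinv (x / (4 * r))) + ∫ r in c..R, hinv (x / (4 * r)) :=
    (integral_add_adjacent_intervals (integrable_aux hmono hx le_rfl hc1 hc2)
      (integrable_aux hmono hx hc1 hc2 le_rfl)).symm
  have hA : (∫ r in x..c, hinv (x / (4 * r))) ≤ -(c - x) := int_ub hmono hle hx le_rfl hc1 hc2
  have hB : (R - c) * hinv (x / (4 * R)) ≤ ∫ r in c..R, hinv (x / (4 * r)) :=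
    int_lb hmono hle hx hc1 hc2 le_rfl
  have hyx1 : (1:ℝ) ≤ y / x := (one_le_div hx).2 hxy
  have hterm1 : (y / x - 1) * (∫ r in x..c, hinv (x / (4 * r))) ≤ 0 :=
    mul_nonpos_of_nonneg_of_nonpos (by linarith) (by linarith)
  have hCx : (1:ℝ) ≤ -(hinv (x / (4 * R))) := by
    have := hle _ (mem_aux hx (hxy.trans hyR) le_rfl)
    linarith
  have hRc : R - c ≤ R * (y - x) / x := by
    have he : R - c = R * (y - x) / y := by
      rw [hc]; field_simp
    rw [he]
    exact div_le_div_of_nonneg_left (by nlinarith) hx hxy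
  have hfin : -(∫ r in c..R, hinv (x / (4 * r)))
      ≤ (R * (y - x) / x) * (-(hinv (x / (4 * R)))) := by
    calc -(∫ r in c..R, hinv (x / (4 * r))) ≤ (R - c) * (-(hinv (x / (4 * R)))) := by nlinarith
    _ ≤ (R * (y - x) / x) * (-(hinv (x / (4 * R)))) :=
        mul_le_mul_of_nonneg_right hRc (by linarith)
  rw [hφ, hφ, hsub, hsplit]
  have : (R * (y - x) / x) * (-(hinv (x / (4 * R))))
      = (R * (-(hinv (x / (4 * R)))) / x) * (y - x) := by ring
  linarith [hterm1, hfin, this]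

end Aux3

/-- Properties of φ(a) = −∫_a^R h⁻¹(a/(4r)) dr, where h(t) = −t/(1+t²)² on
(−∞,−1]: φ is strictly decreasing on (0,R), tends to 0 as a → R⁻ and to +∞
as a → 0⁺, and there is a unique a_M ∈ (0,R) with φ(a_M) = M. -/
theorem phi_radial_properties (M R : ℝ) (hM : 0 < M) (hR : 0 < R)
    (h : ℝ → ℝ) (hdef : ∀ t, h t = -t / (1 + t^2)^2)
    (hinv : ℝ → ℝ)
    (hinvspec : ∀ s ∈ Set.Ioc (0:ℝ) (1/4),
      hinv s ∈ Set.Iic (-1 : ℝ) ∧ h (hinv s) = s)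
    (φ : ℝ → ℝ) (hφ : ∀ a, φ a = -∫ r in a..R, hinv (a / (4 * r))) :
    StrictAntiOn φ (Set.Ioo 0 R) ∧
      Filter.Tendsto φ (nhdsWithin R (Set.Iio R)) (nhds 0) ∧
      Filter.Tendsto φ (nhdsWithin 0 (Set.Ioi 0)) Filter.atTop ∧
      ∃! a : ℝ, a ∈ Set.Ioo 0 R ∧ φ a = M := by
  have hmono := hinv_mono hdef hinvspec
  have hle := hinv_le hinvspec
  have hφR : φ R = 0 := by rw [hφ]; simp
  -- Part 1: strict antitonicity
  have hanti : StrictAntiOn φ (Set.Ioo 0 R) := by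
    intro x hx y hy hxy
    have := gap_aux hmono hle hφ hx.1 hxy.le hy.2.le
    linarith
  -- Part 2: limit at R⁻
  set C₁ : ℝ := -(hinv (1/8)) with hC₁def
  have hC₁ : (1:ℝ) ≤ C₁ := by
    have := hle (1/8) ⟨by norm_num, by norm_num⟩
    rw [hC₁def]; linarith
  have hlimR : Filter.Tendsto φ (nhdsWithin R (Set.Iio R)) (nhds 0) := by
    have hmem : Set.Ioo (R/2) R ∈ nhdsWithin R (Set.Iio R) :=
      Ioo_mem_nhdsLT (by linarith)
    have hg : Filter.Tendsto (fun a : ℝ => 2 * C₁ * (R - a))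
        (nhdsWithin R (Set.Iio R)) (nhds 0) := by
      have : Filter.Tendsto (fun a : ℝ => 2 * C₁ * (R - a)) (nhds R)
          (nhds (2 * C₁ * (R - R))) :=
        (tendsto_const_nhds.mul (tendsto_const_nhds.sub tendsto_id))
      simpa using this.mono_left nhdsWithin_le_nhds
    apply tendsto_of_tendsto_of_tendsto_of_le_of_le' (tendsto_const_nhds (x := (0:ℝ))) hg
    · filter_upwards [hmem] with a ha
      have ha0 : 0 < a := lt_trans (by linarith) ha.1
      have haR : a < R := ha.2
      have := gap_aux hmono hle hφ ha0 ha.2.le le_rfl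
      linarith
    · filter_upwards [hmem] with a ha
      have ha0 : 0 < a := lt_trans (by linarith) ha.1
      have haR : a < R := ha.2
      have hlip := lip_aux hmono hle hφ ha0 ha.2.le le_rfl
      rw [hφR] at hlip
      set Ca : ℝ := -(hinv (a / (4 * R))) with hCadef
      have hCaC₁ : Ca ≤ C₁ := by
        have hmem18 : (1/8 : ℝ) ∈ Set.Ioc (0:ℝ) (1/4) := ⟨by norm_num, by norm_num⟩
        have h18 : (1/8 : ℝ) ≤ a / (4 * R) := by
          rw [le_div_iff₀ (by positivity)]
          linarith [ha.1]
        have := hmono _ hmem18 _ (mem_aux ha0 ha.2.le le_rfl) h18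
        rw [hC₁def, hCadef]; linarith
      have hCa0 : 0 < Ca := by
        have := hle _ (mem_aux ha0 ha.2.le le_rfl)
        rw [hCadef]; linarith
      have hcoef : R * Ca / a ≤ 2 * C₁ := by
        rw [div_le_iff₀ ha0]
        nlinarith [ha.1]
      have hfin : (R * Ca / a) * (R - a) ≤ 2 * C₁ * (R - a) :=
        mul_le_mul_of_nonneg_right hcoef (by linarith)
      exact le_trans (by simpa using hlip) hfin
  -- Part 3: limit at 0⁺
  have hlim0 : Filter.Tendsto φ (nhdsWithin 0 (Set.Ioi 0)) Filter.atTop := by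
    rw [Filter.tendsto_atTop]
    intro b
    obtain ⟨K, hK1, hKb⟩ : ∃ K : ℝ, 1 ≤ K ∧ 2 * b / R ≤ K :=
      ⟨max 1 (2 * b / R), le_max_left _ _, le_max_right _ _⟩
    have hbK : b ≤ R / 2 * K := by
      rw [div_le_iff₀ hR] at hKb; nlinarith
    have hhK : 0 < h (-K) := by
      rw [hdef]
      have hK0 : (0:ℝ) < K := by linarith
      have : -(-K) = K := neg_neg K
      rw [this]
      positivity
    have hδ : 0 < min (R / 2) (2 * R * h (-K)) := lt_min (by linarith) (by positivity)
    filter_upwards [Ioo_mem_nhdsGT hδ] with a ha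
    obtain ⟨ha0, haδ⟩ := ha
    have haR2 : a < R / 2 := lt_of_lt_of_le haδ (min_le_left _ _)
    have hahK : a < 2 * R * h (-K) := lt_of_lt_of_le haδ (min_le_right _ _)
    rw [hφ a]
    have hsplit : (∫ r in a..R, hinv (a / (4 * r)))
        = (∫ r in a..(R/2), hinv (a / (4 * r))) + ∫ r in (R/2)..R, hinv (a / (4 * r)) :=
      (integral_add_adjacent_intervals
        (integrable_aux (R := R) hmono ha0 le_rfl haR2.le (by linarith))
        (integrable_aux hmono ha0 haR2.le (by linarith) le_rfl)).symm
    have h1 : (∫ r in a..(R/2), hinv (a / (4 * r))) ≤ -(R/2 - a) :=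
      int_ub (R := R) hmono hle ha0 le_rfl haR2.le (by linarith)
    have h2 : (∫ r in (R/2)..R, hinv (a / (4 * r))) ≤ -(R / 2 * K) := by
      have := integral_mono_on (μ := volume) (a := R/2) (b := R)
        (f := fun r => hinv (a / (4 * r)))
        (g := fun _ => (-K : ℝ)) (by linarith)
        (integrable_aux hmono ha0 haR2.le (by linarith) le_rfl)
        intervalIntegrable_const ?_
      · rw [intervalIntegral.integral_const, smul_eq_mul] at this
        calc (∫ r in (R/2)..R, hinv (a / (4 * r))) ≤ (R - R/2) * (-K) := this
          _ = -(R / 2 * K) := by ring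
      · intro r hr
        have hrR2 : R / 2 ≤ r := hr.1
        have hr0 : 0 < r := by linarith
        apply hinv_small hdef hinvspec K hK1 _ (mem_aux ha0 (by linarith) hr.2)
        calc a / (4 * r) ≤ a / (2 * R) := by
              apply div_le_div_of_nonneg_left ha0.le (by linarith) (by linarith)
          _ ≤ h (-K) := by rw [div_le_iff₀ (by linarith : (0:ℝ) < 2 * R)]; nlinarith
    rw [hsplit]
    linarith
  -- Part 4: existence and uniqueness
  refine ⟨hanti, hlimR, hlim0, ?_⟩
  have hcont : ∀ a₀, 0 < a₀ → a₀ ≤ R → ContinuousOn φ (Set.Icc a₀ R) := by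
    intro a₀ ha₀ ha₀R
    set L : ℝ := R * (-(hinv (a₀ / (4 * R)))) / a₀ with hLdef
    have key : ∀ u ∈ Set.Icc a₀ R, ∀ v ∈ Set.Icc a₀ R, u ≤ v → φ u - φ v ≤ L * (v - u) := by
      intro u hu v hv huv
      have hu0 : 0 < u := lt_of_lt_of_le ha₀ hu.1
      have hlip := lip_aux hmono hle hφ hu0 huv hv.2
      have hCuC : -(hinv (u / (4 * R))) ≤ -(hinv (a₀ / (4 * R))) := by
        have := hmono _ (mem_aux ha₀ ha₀R le_rfl) _ (mem_aux hu0 hu.2 le_rfl)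
          (div_le_div_of_nonneg_right hu.1 (by linarith))
        linarith
      have hCu1 : (1:ℝ) ≤ -(hinv (u / (4 * R))) := by
        have := hle _ (mem_aux hu0 hu.2 le_rfl); linarith
      have hC0 : (1:ℝ) ≤ -(hinv (a₀ / (4 * R))) := by
        have := hle _ (mem_aux ha₀ ha₀R le_rfl); linarith
      have hcoef : R * (-(hinv (u / (4 * R)))) / u ≤ L := by
        rw [hLdef]
        apply div_le_div₀ (mul_nonneg (by linarith) (by linarith)) (by nlinarith) ha₀ hu.1
      calc φ u - φ v ≤ (R * (-(hinv (u / (4 * R)))) / u) * (v - u) := hlip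
        _ ≤ L * (v - u) := mul_le_mul_of_nonneg_right hcoef (by linarith)
    apply LipschitzOnWith.continuousOn (K := Real.toNNReal L)
    rw [lipschitzOnWith_iff_dist_le_mul]
    intro u hu v hv
    have hL0 : (0:ℝ) ≤ L := by
      have := hle _ (mem_aux ha₀ ha₀R le_rfl)
      rw [hLdef]
      apply div_nonneg (mul_nonneg hR.le (by linarith)) ha₀.le
    have hLc : (Real.toNNReal L : ℝ) = L := Real.coe_toNNReal L hL0
    rw [Real.dist_eq, Real.dist_eq, hLc]
    rcases le_total u v with huv | hvu
    · have h1 := key u hu v hv huv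
      have h2 := gap_aux hmono hle hφ (lt_of_lt_of_le ha₀ hu.1) huv hv.2
      rw [abs_of_nonneg (by linarith : (0:ℝ) ≤ φ u - φ v), abs_of_nonpos (by linarith)]
      linarith
    · have h1 := key v hv u hu hvu
      have h2 := gap_aux hmono hle hφ (lt_of_lt_of_le ha₀ hv.1) hvu hu.2
      rw [abs_of_nonpos (by linarith : φ u - φ v ≤ 0), abs_of_nonneg (by linarith)]
      linarith
  obtain ⟨a₁, hMa₁, ha₁⟩ : ∃ a₁, M < φ a₁ ∧ a₁ ∈ Set.Ioo 0 R := by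
    have h1 : ∀ᶠ a in nhdsWithin 0 (Set.Ioi (0:ℝ)), M < φ a :=
      hlim0.eventually (Filter.eventually_gt_atTop M)
    have h2 : Set.Ioo (0:ℝ) R ∈ nhdsWithin 0 (Set.Ioi (0:ℝ)) :=
      Ioo_mem_nhdsGT hR
    exact (h1.and (Filter.eventually_of_mem h2 fun x hx => hx)).exists
  obtain ⟨a₂, hMa₂, ha₂⟩ : ∃ a₂, φ a₂ < M ∧ a₂ ∈ Set.Ioo 0 R := by
    have h1 : ∀ᶠ a in nhdsWithin R (Set.Iio R), φ a < M :=
      hlimR.eventually (eventually_lt_nhds hM)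
    have h2 : Set.Ioo (0:ℝ) R ∈ nhdsWithin R (Set.Iio R) :=
      Ioo_mem_nhdsLT hR
    exact (h1.and (Filter.eventually_of_mem h2 fun x hx => hx)).exists
  have h12 : a₁ < a₂ := by
    by_contra hc
    push_neg at hc
    have := gap_aux hmono hle hφ ha₂.1 hc ha₁.2.le
    linarith
  have hcc : ContinuousOn φ (Set.Icc a₁ a₂) :=
    (hcont a₁ ha₁.1 ha₁.2.le).mono (Set.Icc_subset_Icc le_rfl ha₂.2.le)
  obtain ⟨a, haI, hfa⟩ := intermediate_value_Icc' h12.le hcc ⟨hMa₂.le, hMa₁.le⟩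
  refine ⟨a, ⟨⟨lt_of_lt_of_le ha₁.1 haI.1, lt_of_le_of_lt haI.2 ha₂.2⟩, hfa⟩, ?_⟩
  rintro a' ⟨ha', hfa'⟩
  by_contra hne
  have haIoo : a ∈ Set.Ioo 0 R := ⟨lt_of_lt_of_le ha₁.1 haI.1, lt_of_le_of_lt haI.2 ha₂.2⟩
  rcases lt_or_gt_of_ne hne with hlt | hgt
  · have := gap_aux hmono hle hφ ha'.1 hlt.le haIoo.2.le
    rw [hfa, hfa'] at this
    linarith
  · have := gap_aux hmono hle hφ haIoo.1 hgt.le ha'.2.le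
    rw [hfa, hfa'] at this
    linarith
end

section
/- Let Ω ⊂ ℝⁿ be a bounded open convex set, M > 0, q ≥ 0, and let C denote the set of functions u : Ω → [0,M] such that x ↦ u(x) − (q/2)|x|² is concave. Then any sequence (u_n) in C has a subsequence converging uniformly on compact subsets of Ω, with gradients converging almost everywhere, to some u ∈ C; in particular the Newton resistance D_Ω(u) = ∫_Ω dx/(1+|∇u(x)|²) attains its minimum on C. -/
open MeasureTheory Filter Metric Set InnerProductSpace
open scoped Topology NNReal

section Helpers

variable {E : Type*} [NormedAddCommGroup E] [InnerProductSpace ℝ E] [CompleteSpace E]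

local notation "⟪" x ", " y "⟫" => @inner ℝ _ _ x y

private lemma line_deriv_aux (f : E → ℝ) {p x : E} (hp : HasGradientAt f p x) (w : E) :
    Tendsto (fun t : ℝ => (f (x + t • w) - f x) / t) (𝓝[>] (0:ℝ)) (𝓝 ⟪p, w⟫) := by
  have hc : HasDerivAt (fun t : ℝ => x + t • w) w 0 := by
    simpa using ((hasDerivAt_id (0 : ℝ)).smul_const w).const_add x
  have hF : HasDerivAt (fun t : ℝ => f (x + t • w)) ⟪p, w⟫ 0 := by
    have h1 : HasFDerivAt f (toDual ℝ E p) (x + (0:ℝ) • w) := by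
      simpa using hp.hasFDerivAt
    have h2 := h1.comp_hasDerivAt 0 hc
    exact (by simpa [Function.comp, toDual_apply_apply] using h2 :
      HasDerivAt (f ∘ fun t : ℝ => x + t • w) ⟪p, w⟫ 0)
  have h3 := hasDerivAt_iff_tendsto_slope.mp hF
  have h4 : Tendsto (slope (fun t : ℝ => f (x + t • w)) 0) (𝓝[>] (0:ℝ)) (𝓝 ⟪p, w⟫) :=
    h3.mono_left (nhdsWithin_mono _ (fun t ht => ne_of_gt ht))
  refine h4.congr' ?_
  filter_upwards [self_mem_nhdsWithin] with t _
  rw [slope_def_field]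
  simp

private lemma concave_support_aux {s : Set E} {f : E → ℝ} (hf : ConcaveOn ℝ s f) {x : E}
    (hx : x ∈ s) {p : E} (hp : HasGradientAt f p x) {y : E} (hy : y ∈ s) :
    f y ≤ f x + ⟪p, y - x⟫ := by
  have hten := line_deriv_aux f hp (y - x)
  have hev : ∀ᶠ t in 𝓝[>] (0:ℝ), f y - f x ≤ (f (x + t • (y - x)) - f x) / t := by
    filter_upwards [Ioc_mem_nhdsGT (zero_lt_one)] with t ht
    have h0 : (0:ℝ) < t := ht.1
    have hcc := hf.2 hx hy (by linarith [ht.2] : (0:ℝ) ≤ 1 - t) h0.le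
      (by ring : (1 - t) + t = 1)
    have hxy : (1 - t) • x + t • y = x + t • (y - x) := by
      rw [sub_smul, one_smul, smul_sub]; abel
    rw [hxy] at hcc
    rw [le_div_iff₀ h0]
    simp only [smul_eq_mul] at hcc
    nlinarith
  have := ge_of_tendsto hten hev
  linarith

private lemma support_unique_aux {s : Set E} {f : E → ℝ} {x p p₀ : E} (hs : s ∈ 𝓝 x)
    (hp₀ : HasGradientAt f p₀ x) (h : ∀ y ∈ s, f y ≤ f x + ⟪p, y - x⟫) : p = p₀ := by
  have key : ∀ w : E, ⟪p₀, w⟫ ≤ ⟪p, w⟫ := by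
    intro w
    have hten := line_deriv_aux f hp₀ w
    have hmem : ∀ᶠ t in 𝓝 (0:ℝ), x + t • w ∈ s := by
      have hc : Tendsto (fun t : ℝ => x + t • w) (𝓝 0) (𝓝 x) := by
        have hcont : Continuous fun t : ℝ => x + t • w := by continuity
        simpa using hcont.tendsto 0
      exact hc.eventually_mem hs
    have hev : ∀ᶠ t in 𝓝[>] (0:ℝ), (f (x + t • w) - f x) / t ≤ ⟪p, w⟫ := by
      filter_upwards [nhdsWithin_le_nhds hmem, self_mem_nhdsWithin] with t hts ht
      have h0 : (0:ℝ) < t := ht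
      rw [div_le_iff₀ h0]
      have h2 := h _ hts
      simp only [add_sub_cancel_left, inner_smul_right] at h2
      rw [mul_comm]
      linarith
    exact le_of_tendsto hten hev
  have h5 := key (p₀ - p)
  have h7 : ⟪p₀ - p, p₀ - p⟫ = ⟪p₀, p₀ - p⟫ - ⟪p, p₀ - p⟫ := inner_sub_left _ _ _
  have h6 : ⟪p₀ - p, p₀ - p⟫ ≤ 0 := by linarith
  have h8 : p₀ - p = 0 := real_inner_self_nonpos.mp h6
  have h9 : p₀ = p := by rwa [sub_eq_zero] at h8
  exact h9.symm

end Helpers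

section Main

variable {n : ℕ}

local notation "Euc" => EuclideanSpace ℝ (Fin n)
local notation "⟪" x ", " y "⟫" => @inner ℝ _ _ x y

set_option maxHeartbeats 2000000 in
private theorem qconcave_subseq (Ω : Set Euc) (hopen : IsOpen Ω)
    (hbdd : Bornology.IsBounded Ω) (hconv : Convex ℝ Ω)
    (M q : ℝ) (hM : 0 < M) (hq : 0 ≤ q)
    (C : Set (Euc → ℝ))
    (hC : C = {u | (∀ x ∈ Ω, u x ∈ Set.Icc 0 M) ∧
      ConcaveOn ℝ Ω (fun x => u x - q / 2 * ‖x‖^2)})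
    (u : ℕ → Euc → ℝ) (hu : ∀ k, u k ∈ C) :
    ∃ φ : ℕ → ℕ, StrictMono φ ∧ ∃ v ∈ C,
        (∀ K : Set Euc, K ⊆ Ω → IsCompact K →
          TendstoUniformlyOn (fun k => u (φ k)) v Filter.atTop K) ∧
        ∀ᵐ x ∂(volume : Measure Euc), x ∈ Ω →
          Filter.Tendsto (fun k => gradient (u (φ k)) x) Filter.atTop
            (nhds (gradient v x)) := by
  classical
  have hmem : ∀ w ∈ C, (∀ x ∈ Ω, w x ∈ Set.Icc 0 M) ∧
      ConcaveOn ℝ Ω (fun x => w x - q / 2 * ‖x‖^2) := by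
    intro w hw; rwa [hC] at hw
  obtain ⟨R, hR⟩ : ∃ R : ℝ, ∀ z ∈ Ω, ‖z‖ ≤ R := by
    obtain ⟨R, hR⟩ := hbdd.subset_closedBall 0
    exact ⟨R, fun z hz => by simpa [mem_closedBall, dist_zero_right] using hR hz⟩
  set M' : ℝ := M + q / 2 * R ^ 2 with hM'def
  have hbound : ∀ w ∈ C, ∀ z ∈ Ω, |w z - q / 2 * ‖z‖ ^ 2| ≤ M' := by
    intro w hw z hz
    obtain ⟨h1, h2⟩ := (hmem w hw).1 z hz
    have h3 : 0 ≤ q / 2 * ‖z‖ ^ 2 := by positivity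
    have h4 : q / 2 * ‖z‖ ^ 2 ≤ q / 2 * R ^ 2 := by
      have h5 := hR z hz
      have h0 : (0:ℝ) ≤ ‖z‖ := norm_nonneg _
      have h6 : ‖z‖ ^ 2 ≤ R ^ 2 := by nlinarith
      exact mul_le_mul_of_nonneg_left h6 (by linarith : (0:ℝ) ≤ q / 2)
    rw [abs_le]
    constructor <;> nlinarith
  -- good balls with uniform Lipschitz constants
  have hgood : ∀ x ∈ Ω, ∃ r > 0, ball x (3 * r) ⊆ Ω ∧ ∀ w ∈ C,
      LipschitzOnWith (2 * M' / r).toNNReal (fun z => w z - q / 2 * ‖z‖ ^ 2)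
        (ball x (2 * r)) := by
    intro x hx
    obtain ⟨ε, hε, hball⟩ := Metric.isOpen_iff.mp hopen x hx
    have h3 : 3 * (ε / 3) = ε := by ring
    refine ⟨ε / 3, by positivity, by rw [h3]; exact hball, ?_⟩
    intro w hw
    have hcc : ConcaveOn ℝ (ball x ε) (fun z => w z - q / 2 * ‖z‖ ^ 2) :=
      (hmem w hw).2.subset hball (convex_ball _ _)
    have hlip := hcc.lipschitzOnWith_of_abs_le (show (0:ℝ) < ε / 3 by positivity)
      (fun a ha => hbound w hw a (hball (mem_ball.mpr ha)))
    have hset : (2 : ℝ) * (ε / 3) = ε - ε / 3 := by ring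
    rw [hset]
    exact hlip
  -- countable dense subset of Ω
  obtain ⟨s, hsc, hsd⟩ := TopologicalSpace.exists_countable_dense ↥Ω
  set D : Set Euc := Subtype.val '' s with hDdef
  have hDsub : D ⊆ Ω := by rintro _ ⟨⟨z, hz⟩, -, rfl⟩; exact hz
  have hDc : D.Countable := hsc.image _
  have hD : ∀ x ∈ Ω, ∀ ε > (0:ℝ), ∃ d ∈ D, dist x d < ε := by
    intro x hx ε hε
    have hx' : (⟨x, hx⟩ : ↥Ω) ∈ closure s := hsd _
    obtain ⟨d, hds, hdd⟩ := Metric.mem_closure_iff.mp hx' ε hε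
    exact ⟨d, ⟨d, hds, rfl⟩, by simpa [Subtype.dist_eq] using hdd⟩
  -- extraction of a pointwise convergent subsequence on D
  haveI : Countable ↥D := hDc.to_subtype
  have hScomp : IsCompact (Set.univ.pi fun _ : ↥D => Set.Icc (0:ℝ) M) :=
    isCompact_univ_pi fun _ => isCompact_Icc
  have hGmem : ∀ k, (fun d : ↥D => u k (d : Euc)) ∈
      Set.univ.pi fun _ : ↥D => Set.Icc (0:ℝ) M :=
    fun k => Set.mem_univ_pi.mpr fun d => (hmem _ (hu k)).1 d (hDsub d.2)
  obtain ⟨l, -, φ, hφ, hlim⟩ := hScomp.tendsto_subseq hGmem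
  have hptD : ∀ d : ↥D, Tendsto (fun k => u (φ k) (d : Euc)) atTop (𝓝 (l d)) := by
    intro d
    have h1 := (tendsto_pi_nhds.mp hlim) d
    simpa [Function.comp] using h1
  -- uniform Cauchy property on small balls
  have hcau : ∀ x ∈ Ω, ∃ r > 0, ball x r ⊆ Ω ∧
      UniformCauchySeqOn (fun k => u (φ k)) atTop (ball x r) := by
    intro x hx
    obtain ⟨r, hr, h3r, hlip⟩ := hgood x hx
    set K : ℝ≥0 := (2 * M' / r).toNNReal with hKdef
    have hsubΩ : ball x r ⊆ Ω := fun z hz => h3r (ball_subset_ball (by linarith) hz)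
    refine ⟨r, hr, hsubΩ, Metric.uniformCauchySeqOn_iff.mpr ?_⟩
    intro ε hε
    set δ : ℝ := min (r / 2) (ε / (6 * ((K:ℝ) + 1))) with hδdef
    have hKnn : (0:ℝ) ≤ (K:ℝ) := K.coe_nonneg
    have hδpos : 0 < δ := lt_min (by positivity) (by positivity)
    have hδr : δ ≤ r / 2 := min_le_left _ _
    have hδε : (K:ℝ) * δ ≤ ε / 6 := by
      have h1 : δ ≤ ε / (6 * ((K:ℝ) + 1)) := min_le_right _ _
      have h2 : ((K:ℝ) + 1) * (ε / (6 * ((K:ℝ) + 1))) = ε / 6 := by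
        field_simp
      nlinarith
    have hchoice : ∀ y : Euc, ∃ d : Euc, y ∈ closedBall x r → d ∈ D ∧ dist y d < δ := by
      intro y
      by_cases hy : y ∈ closedBall x r
      · have hyΩ : y ∈ Ω := h3r (mem_ball.mpr (lt_of_le_of_lt (mem_closedBall.mp hy)
          (by linarith)))
        obtain ⟨d, hd1, hd2⟩ := hD y hyΩ δ hδpos
        exact ⟨d, fun _ => ⟨hd1, hd2⟩⟩
      · exact ⟨x, fun h => absurd h hy⟩
    choose dpt hdpt using hchoice
    have hNch : ∀ y : Euc, ∃ N : ℕ, y ∈ closedBall x r →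
        ∀ a ≥ N, ∀ b ≥ N, dist (u (φ a) (dpt y)) (u (φ b) (dpt y)) < ε / 3 := by
      intro y
      by_cases hy : y ∈ closedBall x r
      · obtain ⟨hdD, -⟩ := hdpt y hy
        have hcs : CauchySeq (fun k => u (φ k) (dpt y)) := (hptD ⟨dpt y, hdD⟩).cauchySeq
        obtain ⟨N, hN⟩ := Metric.cauchySeq_iff.mp hcs (ε / 3) (by positivity)
        exact ⟨N, fun _ a ha b hb => hN a ha b hb⟩
      · exact ⟨0, fun h => absurd h hy⟩
    choose Npt hNpt using hNch
    have hcover : closedBall x r ⊆ ⋃ y ∈ closedBall x r, ball y δ := fun y hy =>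
      mem_biUnion hy (mem_ball_self hδpos)
    obtain ⟨t, htsub, htfin, htcov⟩ :=
      (isCompact_closedBall x r).elim_finite_subcover_image (fun y _ => isOpen_ball) hcover
    set N : ℕ := htfin.toFinset.sup Npt with hNdef
    refine ⟨N, fun a ha b hb z hz => ?_⟩
    have hzcb : z ∈ closedBall x r := ball_subset_closedBall hz
    obtain ⟨y, hyt, hzy⟩ : ∃ y ∈ t, z ∈ ball y δ := by
      have h1 := htcov hzcb
      simpa using h1
    have hycb : y ∈ closedBall x r := htsub hyt
    obtain ⟨hdD, hyd⟩ := hdpt y hycb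
    have hNy : Npt y ≤ N := Finset.le_sup (htfin.mem_toFinset.mpr hyt)
    have hmid := hNpt y hycb a (le_trans hNy ha) b (le_trans hNy hb)
    have hz2 : z ∈ ball x (2 * r) := ball_subset_ball (by linarith) hz
    have hd2 : dpt y ∈ ball x (2 * r) := by
      have h1 : dist (dpt y) y < δ := by rw [dist_comm]; exact hyd
      have h2 : dist y x ≤ r := mem_closedBall.mp hycb
      have h3 : dist (dpt y) x < 2 * r := by
        calc dist (dpt y) x ≤ dist (dpt y) y + dist y x := dist_triangle _ _ _
          _ < δ + r := by linarith
          _ ≤ 2 * r := by linarith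
      exact mem_ball.mpr h3
    have hdz : dist z (dpt y) ≤ 2 * δ := by
      calc dist z (dpt y) ≤ dist z y + dist y (dpt y) := dist_triangle _ _ _
        _ ≤ δ + δ := by
            have := mem_ball.mp hzy
            linarith [le_of_lt this, le_of_lt hyd]
        _ = 2 * δ := by ring
    have hgdiff : ∀ k : ℕ,
        |(u k z - q / 2 * ‖z‖ ^ 2) - (u k (dpt y) - q / 2 * ‖dpt y‖ ^ 2)| ≤ (K:ℝ) * (2 * δ) := by
      intro k
      have h1 := (hlip (u k) (hu k)).dist_le_mul z hz2 (dpt y) hd2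
      calc |(u k z - q / 2 * ‖z‖ ^ 2) - (u k (dpt y) - q / 2 * ‖dpt y‖ ^ 2)|
          = dist (u k z - q / 2 * ‖z‖ ^ 2) (u k (dpt y) - q / 2 * ‖dpt y‖ ^ 2) :=
            (Real.dist_eq _ _).symm
        _ ≤ (K:ℝ) * dist z (dpt y) := h1
        _ ≤ (K:ℝ) * (2 * δ) := mul_le_mul_of_nonneg_left hdz hKnn
    rw [Real.dist_eq]
    rw [Real.dist_eq] at hmid
    have e1 := hgdiff (φ a)
    have e2 := hgdiff (φ b)
    set X := u (φ a) z - q / 2 * ‖z‖ ^ 2 - (u (φ a) (dpt y) - q / 2 * ‖dpt y‖ ^ 2) with hXdef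
    set Y := u (φ a) (dpt y) - u (φ b) (dpt y) with hYdef
    set Z := u (φ b) z - q / 2 * ‖z‖ ^ 2 - (u (φ b) (dpt y) - q / 2 * ‖dpt y‖ ^ 2) with hZdef
    have hdecomp : u (φ a) z - u (φ b) z = X + Y + -Z := by
      rw [hXdef, hYdef, hZdef]; ring
    have t1 : |X + Y + -Z| ≤ |X + Y| + |-Z| := abs_add_le _ _
    have t2 : |X + Y| ≤ |X| + |Y| := abs_add_le _ _
    rw [abs_neg] at t1
    have hK2 : (K:ℝ) * (2 * δ) ≤ ε / 3 := by nlinarith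
    rw [hdecomp]
    linarith
  -- pointwise limit
  have hpt : ∀ x ∈ Ω, ∃ L, Tendsto (fun k => u (φ k) x) atTop (𝓝 L) := by
    intro x hx
    obtain ⟨r, hr, -, hcs⟩ := hcau x hx
    have hc : CauchySeq fun k => u (φ k) x := by
      rw [Metric.cauchySeq_iff]
      intro ε hε
      obtain ⟨N, hN⟩ := Metric.uniformCauchySeqOn_iff.mp hcs ε hε
      exact ⟨N, fun a ha b hb => hN a ha b hb x (mem_ball_self hr)⟩
    exact cauchySeq_tendsto_of_complete hc
  set v : Euc → ℝ := fun x => limUnder atTop (fun k => u (φ k) x) with hvdef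
  have hvpt : ∀ x ∈ Ω, Tendsto (fun k => u (φ k) x) atTop (𝓝 (v x)) := by
    intro x hx
    obtain ⟨L, hL⟩ := hpt x hx
    have hvx : v x = L := hL.limUnder_eq
    rw [hvx]
    exact hL
  -- locally uniform convergence, then uniform on compacts
  have htuoball : ∀ x ∈ Ω, ∃ r > 0,
      TendstoUniformlyOn (fun k => u (φ k)) v atTop (ball x r) := by
    intro x hx
    obtain ⟨r, hr, hsub, hcs⟩ := hcau x hx
    exact ⟨r, hr, hcs.tendstoUniformlyOn_of_tendsto fun z hz => hvpt z (hsub hz)⟩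
  have htluo : TendstoLocallyUniformlyOn (fun k => u (φ k)) v atTop Ω := by
    intro U hU x hx
    obtain ⟨r, hr, htuo⟩ := htuoball x hx
    exact ⟨ball x r, mem_nhdsWithin_of_mem_nhds (ball_mem_nhds x hr), htuo U hU⟩
  have huK : ∀ K : Set Euc, K ⊆ Ω → IsCompact K →
      TendstoUniformlyOn (fun k => u (φ k)) v Filter.atTop K :=
    fun K hK hKc => (tendstoLocallyUniformlyOn_iff_forall_isCompact hopen).mp htluo K hK hKc
  -- v belongs to the class
  have hvC : v ∈ C := by
    rw [hC]
    refine ⟨fun x hx => ?_, hconv, ?_⟩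
    · exact isClosed_Icc.mem_of_tendsto (hvpt x hx)
        (Eventually.of_forall fun k => (hmem _ (hu (φ k))).1 x hx)
    · intro x hx y hy a b ha hb hab
      have h1 : ∀ k : ℕ, a • (u (φ k) x - q / 2 * ‖x‖ ^ 2) + b • (u (φ k) y - q / 2 * ‖y‖ ^ 2) ≤
          u (φ k) (a • x + b • y) - q / 2 * ‖a • x + b • y‖ ^ 2 :=
        fun k => (hmem _ (hu (φ k))).2.2 hx hy ha hb hab
      have hlhs : Tendsto (fun k => a • (u (φ k) x - q / 2 * ‖x‖ ^ 2)
          + b • (u (φ k) y - q / 2 * ‖y‖ ^ 2)) atTop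
          (𝓝 (a • (v x - q / 2 * ‖x‖ ^ 2) + b • (v y - q / 2 * ‖y‖ ^ 2))) :=
        (((hvpt x hx).sub_const _).const_smul a).add
          (((hvpt y hy).sub_const _).const_smul b)
      have hrhs : Tendsto (fun k => u (φ k) (a • x + b • y)
          - q / 2 * ‖a • x + b • y‖ ^ 2) atTop
          (𝓝 (v (a • x + b • y) - q / 2 * ‖a • x + b • y‖ ^ 2)) :=
        (hvpt _ (hconv hx hy ha hb hab)).sub_const _
      exact le_of_tendsto_of_tendsto' hlhs hrhs h1
  -- a.e. differentiability of the concave corrections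
  have hgood' : ∀ x : Euc, ∃ r : ℝ, x ∈ Ω → (0 < r ∧ ball x (3 * r) ⊆ Ω ∧ ∀ w ∈ C,
      LipschitzOnWith (2 * M' / r).toNNReal (fun z => w z - q / 2 * ‖z‖ ^ 2)
        (ball x (2 * r))) := by
    intro x
    by_cases hx : x ∈ Ω
    · obtain ⟨r, hr, hr1, hr2⟩ := hgood x hx
      exact ⟨r, fun _ => ⟨hr, hr1, hr2⟩⟩
    · exact ⟨1, fun h => absurd h hx⟩
  choose rad hrad using hgood'
  have hcover : Ω ⊆ ⋃ x : ↥Ω, ball (x : Euc) (2 * rad x) := by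
    intro z hz
    have hr := (hrad z hz).1
    exact mem_iUnion.mpr ⟨⟨z, hz⟩, mem_ball_self (by positivity)⟩
  obtain ⟨T, hTc, hTeq⟩ := TopologicalSpace.isOpen_iUnion_countable
      (fun x : ↥Ω => ball (x : Euc) (2 * rad x)) (fun _ => isOpen_ball)
  have hcover' : Ω ⊆ ⋃ i ∈ T, ball (i : Euc) (2 * rad i) := by
    intro z hz
    rw [hTeq]
    exact hcover hz
  have hdiffae : ∀ w ∈ C, ∀ᵐ z ∂(volume : Measure Euc), z ∈ Ω →
      DifferentiableAt ℝ (fun y => w y - q / 2 * ‖y‖ ^ 2) z := by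
    intro w hw
    have hballae : ∀ i ∈ T, ∀ᵐ z ∂(volume : Measure Euc),
        z ∈ ball (i : Euc) (2 * rad i) →
          DifferentiableAt ℝ (fun y => w y - q / 2 * ‖y‖ ^ 2) z := by
      intro i _
      obtain ⟨-, -, hlip⟩ := hrad i i.2
      have h1 := (hlip w hw).ae_differentiableWithinAt_of_mem (μ := volume)
      filter_upwards [h1] with z hz hzball
      exact (hz hzball).differentiableAt (isOpen_ball.mem_nhds hzball)
    have hcomb := (ae_ball_iff hTc).mpr hballae
    filter_upwards [hcomb] with z hz hzΩ
    obtain ⟨i, hiT, hzi⟩ : ∃ i ∈ T, z ∈ ball (i : Euc) (2 * rad i) := by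
      have h2 := hcover' hzΩ
      simpa using h2
    exact hz i hiT hzi
  -- splitting the gradient
  have hgradsplit : ∀ (w : Euc → ℝ) (z : Euc),
      DifferentiableAt ℝ (fun y => w y - q / 2 * ‖y‖ ^ 2) z →
      HasGradientAt w (gradient (fun y => w y - q / 2 * ‖y‖ ^ 2) z + q • z) z := by
    intro w z hdg
    have h1 : HasFDerivAt (fun y => w y - q / 2 * ‖y‖ ^ 2)
        (toDual ℝ Euc (gradient (fun y => w y - q / 2 * ‖y‖ ^ 2) z)) z :=
      hdg.hasGradientAt.hasFDerivAt
    have h2 : HasFDerivAt (fun y : Euc => q / 2 * ‖y‖ ^ 2)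
        ((q / 2) • ((2:ℕ) • innerSL ℝ z)) z :=
      (hasStrictFDerivAt_norm_sq z).hasFDerivAt.const_mul _
    have h3 := h1.add h2
    have h4 : ((fun y => w y - q / 2 * ‖y‖ ^ 2) + fun y => q / 2 * ‖y‖ ^ 2) = w := by
      funext y; simp only [Pi.add_apply]; ring
    rw [h4] at h3
    have h5 : toDual ℝ Euc (gradient (fun y => w y - q / 2 * ‖y‖ ^ 2) z + q • z)
        = toDual ℝ Euc (gradient (fun y => w y - q / 2 * ‖y‖ ^ 2) z)
          + (q / 2) • ((2:ℕ) • innerSL ℝ z) := by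
      rw [map_add]
      congr 1
      ext y
      simp only [toDual_apply_apply, ContinuousLinearMap.smul_apply, innerSL_apply_apply,
        real_inner_smul_left, smul_eq_mul, nsmul_eq_mul, Nat.cast_ofNat]
      ring
    rw [hasGradientAt_iff_hasFDerivAt, h5]
    exact h3
  -- a.e. convergence of gradients
  have hae : ∀ᵐ z ∂(volume : Measure Euc), z ∈ Ω →
      Tendsto (fun k => gradient (u (φ k)) z) atTop (𝓝 (gradient v z)) := by
    have hA : ∀ᵐ z ∂(volume : Measure Euc), ∀ k : ℕ, z ∈ Ω →
        DifferentiableAt ℝ (fun y => u (φ k) y - q / 2 * ‖y‖ ^ 2) z :=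
      ae_all_iff.mpr fun k => hdiffae (u (φ k)) (hu (φ k))
    filter_upwards [hA, hdiffae v hvC] with z hz1 hz2 hzΩ
    obtain ⟨r, hr, h3r, hlip⟩ := hgood z hzΩ
    set K : ℝ≥0 := (2 * M' / r).toNNReal with hKdef
    have hdg : ∀ k : ℕ, DifferentiableAt ℝ (fun y => u (φ k) y - q / 2 * ‖y‖ ^ 2) z :=
      fun k => hz1 k hzΩ
    have hdgv : DifferentiableAt ℝ (fun y => v y - q / 2 * ‖y‖ ^ 2) z := hz2 hzΩ
    set p : ℕ → Euc := fun k => gradient (fun y => u (φ k) y - q / 2 * ‖y‖ ^ 2) z with hpdef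
    set pv : Euc := gradient (fun y => v y - q / 2 * ‖y‖ ^ 2) z with hpvdef
    have hpb : ∀ k, p k ∈ closedBall (0 : Euc) K := by
      intro k
      have hfd : ‖fderiv ℝ (fun y => u (φ k) y - q / 2 * ‖y‖ ^ 2) z‖ ≤ K :=
        norm_fderiv_le_of_lipschitzOn ℝ
          (isOpen_ball.mem_nhds (mem_ball_self (by positivity))) (hlip _ (hu (φ k)))
      rw [mem_closedBall, dist_zero_right]
      have heq : p k = (toDual ℝ Euc).symm
          (fderiv ℝ (fun y => u (φ k) y - q / 2 * ‖y‖ ^ 2) z) := rfl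
      rw [heq, LinearIsometryEquiv.norm_map]
      exact hfd
    have hgcc : ∀ k : ℕ, ConcaveOn ℝ Ω (fun y => u (φ k) y - q / 2 * ‖y‖ ^ 2) :=
      fun k => (hmem _ (hu (φ k))).2
    have hgvcc : ConcaveOn ℝ Ω (fun y => v y - q / 2 * ‖y‖ ^ 2) := (hmem v hvC).2
    have hgpt : ∀ y ∈ Ω, Tendsto (fun k => u (φ k) y - q / 2 * ‖y‖ ^ 2) atTop
        (𝓝 (v y - q / 2 * ‖y‖ ^ 2)) := fun y hy => (hvpt y hy).sub_const _
    have hptend : Tendsto p atTop (𝓝 pv) := by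
      apply tendsto_of_subseq_tendsto
      intro ns hns
      obtain ⟨p', -, ms, hms, hmstend⟩ :=
        (isCompact_closedBall (0 : Euc) K).tendsto_subseq (fun j => hpb (ns j))
      refine ⟨ms, ?_⟩
      have hp'eq : p' = pv := by
        apply support_unique_aux (hopen.mem_nhds hzΩ) hdgv.hasGradientAt
        intro y hy
        have hineq : ∀ j : ℕ, (u (φ (ns (ms j))) y - q / 2 * ‖y‖ ^ 2) ≤
            (u (φ (ns (ms j))) z - q / 2 * ‖z‖ ^ 2) + ⟪p (ns (ms j)), y - z⟫ :=
          fun j => concave_support_aux (hgcc _) hzΩ (hdg _).hasGradientAt hy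
        have hns' : Tendsto (fun j => ns (ms j)) atTop atTop :=
          hns.comp hms.tendsto_atTop
        have hlhs : Tendsto (fun j => u (φ (ns (ms j))) y - q / 2 * ‖y‖ ^ 2) atTop
            (𝓝 (v y - q / 2 * ‖y‖ ^ 2)) := (hgpt y hy).comp hns'
        have hrhs : Tendsto (fun j => (u (φ (ns (ms j))) z - q / 2 * ‖z‖ ^ 2)
            + ⟪p (ns (ms j)), y - z⟫) atTop
            (𝓝 ((v z - q / 2 * ‖z‖ ^ 2) + ⟪p', y - z⟫)) :=
          ((hgpt z hzΩ).comp hns').add (hmstend.inner tendsto_const_nhds)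
        exact le_of_tendsto_of_tendsto' hlhs hrhs hineq
      rw [← hp'eq]
      exact hmstend
    have hgu : ∀ k : ℕ, gradient (u (φ k)) z = p k + q • z :=
      fun k => (hgradsplit (u (φ k)) z (hdg k)).gradient
    have hgv2 : gradient v z = pv + q • z := (hgradsplit v z hdgv).gradient
    rw [hgv2]
    have hfinal : Tendsto (fun k => p k + q • z) atTop (𝓝 (pv + q • z)) :=
      hptend.add tendsto_const_nhds
    exact hfinal.congr fun k => (hgu k).symm
  exact ⟨φ, hφ, v, hvC, huK, hae⟩

end Main

set_option maxHeartbeats 1000000 in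
/-- Compactness of the class of q-concave profiles with values in [0,M] on a
bounded open convex Ω ⊂ ℝⁿ (uniform convergence on compacts of a subsequence,
together with a.e. convergence of gradients, to a limit in the class), and
existence of a minimizer of the Newton resistance on this class. -/
theorem qconcave_compactness_and_existence (n : ℕ)
    (Ω : Set (EuclideanSpace ℝ (Fin n))) (hopen : IsOpen Ω)
    (hbdd : Bornology.IsBounded Ω) (hconv : Convex ℝ Ω)
    (M q : ℝ) (hM : 0 < M) (hq : 0 ≤ q)
    (C : Set (EuclideanSpace ℝ (Fin n) → ℝ))
    (hC : C = {u | (∀ x ∈ Ω, u x ∈ Set.Icc 0 M) ∧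
      ConcaveOn ℝ Ω (fun x => u x - q / 2 * ‖x‖^2)}) :
    (∀ u : ℕ → EuclideanSpace ℝ (Fin n) → ℝ, (∀ k, u k ∈ C) →
      ∃ φ : ℕ → ℕ, StrictMono φ ∧ ∃ v ∈ C,
        (∀ K : Set (EuclideanSpace ℝ (Fin n)), K ⊆ Ω → IsCompact K →
          TendstoUniformlyOn (fun k => u (φ k)) v Filter.atTop K) ∧
        ∀ᵐ x ∂(volume : Measure (EuclideanSpace ℝ (Fin n))), x ∈ Ω →
          Filter.Tendsto (fun k => gradient (u (φ k)) x) Filter.atTop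
            (nhds (gradient v x))) ∧
    ∃ v ∈ C, ∀ w ∈ C,
      (∫ x in Ω, 1 / (1 + ‖gradient v x‖^2)) ≤
        ∫ x in Ω, 1 / (1 + ‖gradient w x‖^2) := by
  classical
  have key := qconcave_subseq Ω hopen hbdd hconv M q hM hq C hC
  refine ⟨key, ?_⟩
  set Dfun : (EuclideanSpace ℝ (Fin n) → ℝ) → ℝ :=
    fun w => ∫ x in Ω, 1 / (1 + ‖gradient w x‖^2) with hDfundef
  -- the zero function belongs to C
  have h0C : (fun _ : EuclideanSpace ℝ (Fin n) => (0:ℝ)) ∈ C := by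
    rw [hC]
    refine ⟨fun x _ => ⟨le_refl 0, hM.le⟩, ?_⟩
    refine ⟨hconv, fun x _ y _ a b ha hb hab => ?_⟩
    have h7 : (0:ℝ) ≤ q / 2 := by positivity
    have hn : ‖a • x + b • y‖ ≤ a * ‖x‖ + b * ‖y‖ := by
      calc ‖a • x + b • y‖ ≤ ‖a • x‖ + ‖b • y‖ := norm_add_le _ _
        _ = a * ‖x‖ + b * ‖y‖ := by
            rw [norm_smul, norm_smul, Real.norm_eq_abs, Real.norm_eq_abs,
              abs_of_nonneg ha, abs_of_nonneg hb]
    have h8 : ‖a • x + b • y‖ ^ 2 ≤ (a * ‖x‖ + b * ‖y‖) ^ 2 := by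
      nlinarith [norm_nonneg (a • x + b • y)]
    have h9 : (a * ‖x‖ + b * ‖y‖) ^ 2 ≤ a * ‖x‖ ^ 2 + b * ‖y‖ ^ 2 := by
      nlinarith [sq_nonneg (‖x‖ - ‖y‖), mul_nonneg ha hb]
    have h10 : ‖a • x + b • y‖ ^ 2 ≤ a * ‖x‖ ^ 2 + b * ‖y‖ ^ 2 := le_trans h8 h9
    have h11 := mul_le_mul_of_nonneg_left h10 h7
    simp only [smul_eq_mul]
    nlinarith [h11]
  have hSne : (Dfun '' C).Nonempty := ⟨_, _, h0C, rfl⟩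
  have hSbdd : BddBelow (Dfun '' C) := by
    refine ⟨0, ?_⟩
    rintro _ ⟨w, -, rfl⟩
    exact integral_nonneg fun x => by positivity
  obtain ⟨seq, -, hseqlim, hseqmem⟩ := exists_seq_tendsto_sInf hSne hSbdd
  choose w hwC hwD using hseqmem
  obtain ⟨φ, hφ, v, hvC, -, haegrad⟩ := key w hwC
  refine ⟨v, hvC, ?_⟩
  haveI hfin : IsFiniteMeasure
      ((volume : Measure (EuclideanSpace ℝ (Fin n))).restrict Ω) := ⟨by
    rw [Measure.restrict_apply_univ]
    exact hbdd.measure_lt_top⟩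
  have hmeas : ∀ w' : EuclideanSpace ℝ (Fin n) → ℝ, AEStronglyMeasurable
      (fun x => 1 / (1 + ‖gradient w' x‖^2))
      ((volume : Measure (EuclideanSpace ℝ (Fin n))).restrict Ω) := by
    intro w'
    have h1 : Measurable fun x => gradient w' x := by
      have h2 : Measurable (fderiv ℝ w') := measurable_fderiv ℝ w'
      exact ((toDual ℝ (EuclideanSpace ℝ (Fin n))).symm.continuous.measurable).comp h2
    exact (measurable_const.div (measurable_const.add ((h1.norm).pow_const 2))).aestronglyMeasurable
  have hDCT : Tendsto (fun k => Dfun (w (φ k))) atTop (𝓝 (Dfun v)) := by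
    apply tendsto_integral_of_dominated_convergence (fun _ => (1:ℝ))
      (fun k => hmeas _) (integrable_const 1)
    · intro k
      filter_upwards with x
      have h1 : (0:ℝ) < 1 + ‖gradient (w (φ k)) x‖^2 := by positivity
      rw [Real.norm_eq_abs, abs_of_nonneg (by positivity), div_le_one h1]
      nlinarith [sq_nonneg ‖gradient (w (φ k)) x‖]
    · have h2 : ∀ᵐ x ∂((volume : Measure (EuclideanSpace ℝ (Fin n))).restrict Ω),
          x ∈ Ω := ae_restrict_mem hopen.measurableSet
      filter_upwards [ae_restrict_of_ae haegrad, h2] with x hx hxΩ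
      have h3 := hx hxΩ
      have hcont : Continuous fun y : EuclideanSpace ℝ (Fin n) => 1 / (1 + ‖y‖^2) := by
        refine Continuous.div continuous_const ?_ (fun y => by positivity)
        continuity
      exact ((hcont.tendsto _).comp h3)
  have hDv : Dfun v = sInf (Dfun '' C) := by
    have h2 : Tendsto (fun k => seq (φ k)) atTop (𝓝 (sInf (Dfun '' C))) :=
      hseqlim.comp hφ.tendsto_atTop
    have h3 : (fun k => Dfun (w (φ k))) = fun k => seq (φ k) :=
      funext fun k => hwD (φ k)
    rw [h3] at hDCT
    exact tendsto_nhds_unique hDCT h2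
  intro w' hw'
  show Dfun v ≤ Dfun w'
  rw [hDv]
  exact csInf_le hSbdd ⟨w', hw', rfl⟩
end
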